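/- arXiv:1303.4348 — 5 statements merged into one kernel-verified Lean document; each statement's English description precedes it below -/
import Mathlib

section
/- For any trigonometric polynomial X of degree at most m (i.e., X(f) = Σ_{j=-m}^{m} x_j e^{i2πjf}), the derivative satisfies sup_f |X'(f)| ≤ 2πm · sup_f |X(f)|, and consequently sup_f |X''(f)| ≤ (2πm)^2 · sup_f |X(f)|. -/
open Complex Finset

noncomputable section
namespace BernAux

def th (m k : ℕ) : ℝ := (2*k+1) * Real.pi / (4*m)

def ee (m : ℕ) (j : ℤ) (k : ℕ) : ℂ := Complex.exp (Complex.I * j * ((2 * th m k : ℝ) : ℂ))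

def A (m : ℕ) (j : ℤ) : ℂ :=
  ∑ k ∈ range (2*m), (((-1)^k / Real.sin (th m k) ^ 2 : ℝ) : ℂ) * ee m j k

def S (m : ℕ) (j : ℤ) : ℂ := ∑ k ∈ range (2*m), (-1 : ℂ)^k * ee m j k

lemma sin_th_pos {m k : ℕ} (hm : 0 < m) (hk : k < 2*m) : 0 < Real.sin (th m k) := by
  have hk' : (2*(k:ℝ)+1) < 4*m := by
    have : (k:ℝ) + 1 ≤ 2*m := by exact_mod_cast hk
    linarith
  apply Real.sin_pos_of_pos_of_lt_pi
  · unfold th; positivity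
  · unfold th
    rw [div_lt_iff₀ (by positivity)]
    nlinarith [Real.pi_pos]

lemma ee_eq_pow {m : ℕ} (hm : 0 < m) (j : ℤ) (k : ℕ) :
    ee m j k = (Complex.exp (Real.pi * Complex.I * j / (2*m))) ^ (2*k+1) := by
  have hm' : (m:ℂ) ≠ 0 := Nat.cast_ne_zero.mpr hm.ne'
  have h : ((2*k+1 : ℕ) : ℂ) * (Real.pi * Complex.I * j / (2*m)) =
      Complex.I * j * ((2 * th m k : ℝ) : ℂ) := by
    simp only [th]; push_cast; field_simp; ring
  rw [ee, ← h, Complex.exp_nat_mul]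

lemma S_eq_zero {m : ℕ} (hm : 0 < m) {j : ℤ}
    (hj : Complex.exp (Real.pi * Complex.I * j / m) ≠ -1) : S m j = 0 := by
  have hm' : (m:ℂ) ≠ 0 := Nat.cast_ne_zero.mpr hm.ne'
  set w : ℂ := Complex.exp (Real.pi * Complex.I * j / (2*m)) with hw
  have hw2 : w^2 = Complex.exp (Real.pi * Complex.I * j / m) := by
    rw [hw, ← Complex.exp_nat_mul]; congr 1; push_cast; field_simp
  have hr : (-w^2) ≠ 1 := by
    rw [hw2]; intro h; apply hj; linear_combination -h
  have hS : S m j = w * ∑ k ∈ range (2*m), (-w^2)^k := by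
    rw [S, Finset.mul_sum]
    refine Finset.sum_congr rfl fun k _ => ?_
    rw [ee_eq_pow hm]
    ring
  have h1 : (-w^2)^(2*m) = 1 := by
    rw [Even.neg_pow (even_two_mul m), hw2, ← Complex.exp_nat_mul]
    have h2 : ((2*m:ℕ):ℂ) * (Real.pi * Complex.I * j / m) = j * (2*Real.pi*Complex.I) := by
      push_cast; field_simp
    rw [h2, Complex.exp_int_mul_two_pi_mul_I]
  rw [hS, geom_sum_eq hr, h1]
  simp


lemma exp_ne_neg_one {m : ℕ} {j : ℤ} (h1 : 1 ≤ j) (h2 : j < m) :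
    Complex.exp (Real.pi * Complex.I * j / m) ≠ -1 := by
  have hm0 : (1:ℤ) < m := lt_of_le_of_lt h1 h2
  have hm' : (m:ℂ) ≠ 0 := by
    have : m ≠ 0 := by omega
    simpa using this
  have hπI : (Real.pi : ℂ) * Complex.I ≠ 0 := by
    simp [Real.pi_ne_zero, Complex.I_ne_zero]
  intro h
  have h2' : Complex.exp (Real.pi * Complex.I * j / m - Real.pi * Complex.I) = 1 := by
    rw [Complex.exp_sub, h, Complex.exp_pi_mul_I]; norm_num
  rw [Complex.exp_eq_one_iff] at h2'
  obtain ⟨n, hn⟩ := h2'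
  have h3 : (Real.pi:ℂ) * Complex.I * ((j:ℂ)/m - 1) = (Real.pi:ℂ) * Complex.I * (2*n) := by
    field_simp
    field_simp at hn
    linear_combination hn
  have h4 : (j:ℂ)/(m:ℂ) - 1 = 2*n := mul_left_cancel₀ hπI h3
  have h5 : (j:ℂ) = (2*n+1)*m := by
    field_simp at h4
    linear_combination h4
  have h6 : j = (2*n+1)*m := by exact_mod_cast h5
  rcases le_or_gt 0 n with hn0 | hn0
  · nlinarith
  · have : n ≤ -1 := by omega
    nlinarith

lemma S_at_m {m : ℕ} (hm : 0 < m) : S m m = 2*m*Complex.I := by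
  have hm' : (m:ℂ) ≠ 0 := Nat.cast_ne_zero.mpr hm.ne'
  have hw : Complex.exp (Real.pi * Complex.I * ((m:ℤ):ℂ) / (2*m)) = Complex.I := by
    have harg : (Real.pi : ℂ) * Complex.I * ((m:ℤ):ℂ) / (2*m) = ((Real.pi/2 : ℝ):ℂ) * Complex.I := by
      push_cast; field_simp
    rw [harg, Complex.exp_mul_I]
    push_cast
    rw [Complex.cos_pi_div_two, Complex.sin_pi_div_two]
    simp
  have hterm : ∀ k ∈ range (2*m), (-1:ℂ)^k * ee m (m:ℤ) k = Complex.I := by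
    intro k _
    rw [ee_eq_pow hm, hw, pow_succ, pow_mul, Complex.I_sq, ← mul_assoc, ← mul_pow]
    norm_num
  rw [S, Finset.sum_congr rfl hterm, Finset.sum_const, card_range]
  push_cast; ring

lemma pow_neg_one_shift (a b r : ℕ) (h : a = b + 2*r) : ((-1:ℝ))^a = (-1)^b := by
  rw [h, pow_add, pow_mul]; norm_num

lemma A_antiperiod {m : ℕ} (hm : 0 < m) (j : ℤ) : A m (j + 2*m) = - A m j := by
  rw [A, A, ← Finset.sum_neg_distrib]
  refine Finset.sum_congr rfl fun k _ => ?_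
  have harg : Complex.I * ((j + 2*(m:ℤ) : ℤ):ℂ) * ((2*th m k : ℝ):ℂ) =
      Complex.I * (j:ℂ) * ((2*th m k : ℝ):ℂ) + ((2*k+1 : ℕ):ℂ) * (Real.pi * Complex.I) := by
    simp only [th]
    have hm' : (m:ℂ) ≠ 0 := Nat.cast_ne_zero.mpr hm.ne'
    push_cast
    field_simp
    ring
  have hee : ee m (j + 2*m) k = - ee m j k := by
    rw [ee, ee, harg, Complex.exp_add, Complex.exp_nat_mul, Complex.exp_pi_mul_I,
      pow_succ, pow_mul]
    norm_num
  rw [hee]; ring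

lemma A_odd {m : ℕ} (hm : 0 < m) (j : ℤ) : A m (-j) = - A m j := by
  rw [A, A, ← Finset.sum_neg_distrib,
    ← Finset.sum_range_reflect (fun k => -((((-1)^k / Real.sin (th m k) ^ 2 : ℝ) : ℂ) * ee m j k)) (2*m)]
  refine Finset.sum_congr rfl fun k hk => ?_
  have hk' : k < 2*m := mem_range.mp hk
  have hth : th m (2*m-1-k) = Real.pi - th m k := by
    unfold th
    have h1 : ((2*m-1-k : ℕ):ℝ) = 2*(m:ℝ) - 1 - k := by
      have : k + 1 ≤ 2*m := by omega
      push_cast [Nat.cast_sub (by omega : 1 + k ≤ 2*m)]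
      have : ((2*m-1-k : ℕ)) = 2*m - (1+k) := by omega
      rw [this]
      push_cast [Nat.cast_sub (by omega : 1 + k ≤ 2*m)]
      ring
    rw [h1]
    field_simp
    ring
  have hsin : Real.sin (th m (2*m-1-k)) = Real.sin (th m k) := by
    rw [hth, Real.sin_pi_sub]
  have hsign : ((-1:ℝ))^(2*m-1-k) = -(-1:ℝ)^k := by
    have h1 : (-1:ℝ)^(2*m-1-k) * (-1)^(k+1) = 1 := by
      rw [← pow_add, show (2*m-1-k)+(k+1) = 2*m by omega, pow_mul]; norm_num
    have h2 : (-1:ℝ)^(k+1) * (-1)^(k+1) = 1 := by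
      rw [← mul_pow]; norm_num
    have h3 : (-1:ℝ)^(2*m-1-k) = (-1)^(k+1) := by
      linear_combination (-1:ℝ)^(k+1) * h1 - (-1:ℝ)^(2*m-1-k) * h2
    rw [h3, pow_succ]; ring
  have hee : ee m j (2*m-1-k) = ee m (-j) k := by
    rw [ee, ee, hth]
    have harg : Complex.I * (j:ℂ) * ((2*(Real.pi - th m k) : ℝ):ℂ) =
        Complex.I * ((-j : ℤ):ℂ) * ((2*th m k :ℝ):ℂ) + (j:ℂ)*(2*(Real.pi:ℂ)*Complex.I) := by
      push_cast; ring
    rw [harg, Complex.exp_add, Complex.exp_int_mul_two_pi_mul_I, mul_one]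
  rw [hsin, hsign, hee]
  push_cast
  ring


lemma A_recur {m : ℕ} (hm : 0 < m) (j : ℤ) :
    A m (j+1) + A m (j-1) - 2 * A m j = -4 * S m j := by
  rw [A, A, A, S, Finset.mul_sum, Finset.mul_sum, ← Finset.sum_add_distrib,
    ← Finset.sum_sub_distrib]
  refine Finset.sum_congr rfl fun k hk => ?_
  have hk' : k < 2*m := mem_range.mp hk
  set s := Real.sin (th m k) with hs
  have hsne : s ≠ 0 := (sin_th_pos hm hk').ne'
  set c : ℝ := (-1)^k / s^2 with hc
  have h1 : ee m (j+1) k = ee m j k * Complex.exp (Complex.I * ((2 * th m k : ℝ):ℂ)) := by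
    rw [ee, ee, ← Complex.exp_add]; congr 1; push_cast; ring
  have h2 : ee m (j-1) k = ee m j k * Complex.exp (-(Complex.I * ((2 * th m k : ℝ):ℂ))) := by
    rw [ee, ee, ← Complex.exp_add]; congr 1; push_cast; ring
  have hcos : Real.cos (2 * th m k) = 1 - 2 * s^2 := by
    have hpy := Real.sin_sq_add_cos_sq (th m k)
    rw [Real.cos_two_mul]
    rw [hs]
    linarith
  have hE : Complex.exp (Complex.I * ((2 * th m k : ℝ):ℂ)) +
      Complex.exp (-(Complex.I * ((2 * th m k : ℝ):ℂ))) = 2 - 4 * ((s:ℝ):ℂ)^2 := by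
    rw [show -(Complex.I * ((2 * th m k : ℝ):ℂ)) = (-((2 * th m k : ℝ):ℂ)) * Complex.I by ring,
      show Complex.I * ((2 * th m k : ℝ):ℂ) = ((2 * th m k : ℝ):ℂ) * Complex.I by ring,
      Complex.exp_mul_I, Complex.exp_mul_I, Complex.cos_neg, Complex.sin_neg,
      ← Complex.ofReal_cos, hcos]
    push_cast
    ring
  have hcs : ((c:ℝ):ℂ) * ((s:ℝ):ℂ)^2 = (-1)^k := by
    have hsC : ((s:ℝ):ℂ) ≠ 0 := by exact_mod_cast hsne
    rw [hc]; push_cast; field_simp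
  rw [h1, h2]
  linear_combination (((c:ℝ):ℂ) * ee m j k) * hE - 4 * (ee m j k) * hcs

lemma A_lin {m : ℕ} (hm : 0 < m) : ∀ j : ℕ, j ≤ m → A m (j:ℤ) = A m 1 * (j:ℂ) := by
  intro j
  induction j using Nat.strong_induction_on with
  | _ j ih =>
    match j with
    | 0 =>
      intro _
      have h0 := A_odd hm 0
      rw [neg_zero] at h0
      have : A m 0 = 0 := by linear_combination h0 / 2
      simpa using this
    | 1 => intro _; simp
    | (n+2) =>
      intro hj
      have hr := A_recur hm ((n:ℤ)+1)
      have hS : S m ((n:ℤ)+1) = 0 :=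
        S_eq_zero hm (exp_ne_neg_one (by omega) (by exact_mod_cast (by omega : n+1 < m)))
      rw [hS] at hr
      have e1 : A m ((n:ℤ)+1+1) = A m ((n+2 : ℕ):ℤ) := by
        rw [show ((n:ℤ)+1+1) = ((n+2:ℕ):ℤ) by omega]
      have e2 : A m ((n:ℤ)+1-1) = A m ((n : ℕ):ℤ) := by
        rw [show ((n:ℤ)+1-1) = ((n:ℕ):ℤ) by omega]
      have ih1 : A m ((n+1 : ℕ):ℤ) = A m 1 * ((n+1:ℕ):ℂ) := ih (n+1) (by omega) (by omega)
      have ih0 : A m ((n : ℕ):ℤ) = A m 1 * ((n:ℕ):ℂ) := ih n (by omega) (by omega)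
      have e3 : A m ((n:ℤ)+1) = A m 1 * ((n+1:ℕ):ℂ) := by
        rw [show ((n:ℤ)+1) = ((n+1:ℕ):ℤ) by push_cast; ring]; exact ih1
      rw [e1, e2, e3, ih0] at hr
      push_cast at hr ⊢
      linear_combination hr

lemma A_one {m : ℕ} (hm : 0 < m) : A m 1 = 4*m*Complex.I := by
  have hrm := A_recur hm (m:ℤ)
  rw [S_at_m hm] at hrm
  have h1 : A m ((m:ℤ)+1) = A m ((m:ℤ)-1) := by
    have h2 : ((m:ℤ)+1) = (1 - m) + 2*m := by ring
    rw [h2, A_antiperiod hm, show (1 - (m:ℤ)) = -((m:ℤ)-1) by ring, A_odd hm, neg_neg]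
  have hAm : A m (m:ℤ) = A m 1 * (m:ℂ) := A_lin hm m le_rfl
  have hAm1 : A m ((m:ℤ)-1) = A m 1 * ((m:ℂ)-1) := by
    have h3 := A_lin hm (m-1) (Nat.sub_le _ _)
    have hc1 : (((m-1:ℕ)):ℤ) = (m:ℤ)-1 := by omega
    have hc2 : (((m-1:ℕ)):ℂ) = (m:ℂ)-1 := by
      have : ((m-1:ℕ):ℂ) = ((m:ℕ):ℂ) - 1 := by
        push_cast [Nat.cast_sub hm]; ring
      simpa using this
    rw [hc1, hc2] at h3
    exact h3
  rw [h1, hAm1, hAm] at hrm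
  have : (-2 : ℂ) * A m 1 = -8*m*Complex.I := by linear_combination hrm
  linear_combination this / (-2)

lemma A_eq {m : ℕ} (hm : 0 < m) (j : ℤ) (hj1 : -(m:ℤ) ≤ j) (hj2 : j ≤ m) :
    A m j = 4*m*Complex.I*j := by
  rcases le_or_gt 0 j with h | h
  · have hjn : j = (j.toNat : ℤ) := (Int.toNat_of_nonneg h).symm
    have hle : j.toNat ≤ m := by omega
    rw [hjn, A_lin hm j.toNat hle, A_one hm]
    rw [hjn]; push_cast; ring
  · have hjn : (-j) = ((-j).toNat : ℤ) := (Int.toNat_of_nonneg (by omega)).symm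
    have hle : (-j).toNat ≤ m := by omega
    have := A_odd hm (-j)
    rw [neg_neg] at this
    rw [this, hjn, A_lin hm (-j).toNat hle, A_one hm]
    have h2 : (((-j).toNat : ℕ):ℂ) = -(j:ℂ) := by
      have := congrArg (fun z : ℤ => (z:ℂ)) hjn
      push_cast at this
      linear_combination -this
    rw [h2]; ring


def tt (m k : ℕ) : ℝ := (2*k+1)/(4*m)

def ga (m k : ℕ) : ℝ := (-1)^k * Real.pi / (2*m*Real.sin (th m k)^2)

lemma interp {m : ℕ} (j : ℤ) (hj1 : -(m:ℤ) ≤ j) (hj2 : j ≤ m) :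
    ∑ k ∈ range (2*m), ((ga m k : ℝ):ℂ) *
      Complex.exp (2*(Real.pi:ℂ)*Complex.I*(j:ℂ)*((tt m k : ℝ):ℂ)) =
    2*(Real.pi:ℂ)*Complex.I*(j:ℂ) := by
  rcases Nat.eq_zero_or_pos m with hm | hm
  · subst hm
    have : j = 0 := by omega
    subst this
    simp
  have hm' : (m:ℝ) ≠ 0 := Nat.cast_ne_zero.mpr hm.ne'
  have hmc : (m:ℂ) ≠ 0 := Nat.cast_ne_zero.mpr hm.ne'
  have hstep : ∀ k ∈ range (2*m), ((ga m k : ℝ):ℂ) *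
      Complex.exp (2*(Real.pi:ℂ)*Complex.I*(j:ℂ)*((tt m k : ℝ):ℂ)) =
      ((Real.pi/(2*m) : ℝ):ℂ) * ((((-1)^k / Real.sin (th m k) ^ 2 : ℝ) : ℂ) * ee m j k) := by
    intro k hk
    have hsne : Real.sin (th m k) ≠ 0 := (sin_th_pos hm (mem_range.mp hk)).ne'
    have harg : 2*(Real.pi:ℂ)*Complex.I*(j:ℂ)*((tt m k : ℝ):ℂ) =
        Complex.I * (j:ℂ) * ((2 * th m k : ℝ) : ℂ) := by
      simp only [tt, th]
      push_cast
      field_simp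
    rw [harg, ← ee]
    simp only [ga]
    push_cast
    field_simp
  rw [Finset.sum_congr rfl hstep, ← Finset.mul_sum, ← A, A_eq hm j hj1 hj2]
  push_cast
  field_simp
  ring

lemma ga_abs {m k : ℕ} (hm : 0 < m) (hk : k < 2*m) : |ga m k| = (-1)^k * ga m k := by
  have hs := sin_th_pos hm hk
  have hpos : (0:ℝ) < Real.pi / (2*m*Real.sin (th m k)^2) := by positivity
  rcases Nat.even_or_odd k with he | ho
  · rw [he.neg_one_pow]
    simp only [ga, he.neg_one_pow, one_mul]
    rw [abs_of_pos hpos]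
  · rw [ho.neg_one_pow]
    simp only [ga, ho.neg_one_pow]
    have he : (-1) * Real.pi / (2*m*Real.sin (th m k)^2) =
        -(Real.pi / (2*m*Real.sin (th m k)^2)) := by ring
    rw [he, abs_neg, abs_of_pos hpos]
    ring

lemma exp_tt_m {m k : ℕ} (hm : 0 < m) :
    Complex.exp (2*(Real.pi:ℂ)*Complex.I*((m:ℤ):ℂ)*((tt m k : ℝ):ℂ)) = (-1)^k * Complex.I := by
  have hm' : (m:ℂ) ≠ 0 := Nat.cast_ne_zero.mpr hm.ne'
  have harg : 2*(Real.pi:ℂ)*Complex.I*((m:ℤ):ℂ)*((tt m k : ℝ):ℂ) =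
      ((2*k+1:ℕ):ℂ) * (((Real.pi/2 : ℝ):ℂ) * Complex.I) := by
    simp only [tt]
    push_cast
    field_simp
    ring
  rw [harg, Complex.exp_nat_mul]
  have hI : Complex.exp (((Real.pi/2 : ℝ):ℂ) * Complex.I) = Complex.I := by
    rw [Complex.exp_mul_I]
    push_cast
    rw [Complex.cos_pi_div_two, Complex.sin_pi_div_two]
    simp
  rw [hI, pow_succ, pow_mul, Complex.I_sq]

lemma ga_sum (m : ℕ) : ∑ k ∈ range (2*m), |ga m k| = 2*Real.pi*m := by
  rcases Nat.eq_zero_or_pos m with hm | hm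
  · subst hm; simp
  have h := interp (m := m) (m:ℤ) (by omega) (le_refl _)
  have h2 : ∀ k ∈ range (2*m), ((ga m k : ℝ):ℂ) *
      Complex.exp (2*(Real.pi:ℂ)*Complex.I*((m:ℤ):ℂ)*((tt m k : ℝ):ℂ)) =
      Complex.I * ((|ga m k| : ℝ):ℂ) := by
    intro k hk
    rw [exp_tt_m hm, ga_abs hm (mem_range.mp hk)]
    push_cast
    ring
  rw [Finset.sum_congr rfl h2, ← Finset.mul_sum] at h
  have h3 : (((∑ k ∈ range (2*m), |ga m k| : ℝ)):ℂ) = ((2*Real.pi*m : ℝ):ℂ) := by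
    apply mul_left_cancel₀ Complex.I_ne_zero
    push_cast
    push_cast at h
    linear_combination h
  exact_mod_cast h3


lemma hasDerivAt_X (m : ℕ) (x : Fin (2 * m + 1) → ℂ) (X : ℝ → ℂ)
    (hX : ∀ f : ℝ, X f = ∑ j : Fin (2 * m + 1), x j *
      Complex.exp (2 * Real.pi * Complex.I * ((j : ℂ) - (m : ℂ)) * f)) (f : ℝ) :
    HasDerivAt X (∑ j : Fin (2 * m + 1), (x j * (2 * Real.pi * Complex.I * ((j : ℂ) - (m : ℂ)))) *
      Complex.exp (2 * Real.pi * Complex.I * ((j : ℂ) - (m : ℂ)) * f)) f := by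
  have hXfun : X = fun f : ℝ => ∑ j : Fin (2 * m + 1), x j *
      Complex.exp (2 * Real.pi * Complex.I * ((j : ℂ) - (m : ℂ)) * f) := funext hX
  rw [hXfun]
  apply HasDerivAt.fun_sum
  intro j _
  set c : ℂ := 2 * Real.pi * Complex.I * ((j : ℂ) - (m : ℂ)) with hc
  have h1 : HasDerivAt (fun z : ℂ => Complex.exp (c * z)) (c * Complex.exp (c * (f:ℂ))) (f:ℂ) := by
    have := ((hasDerivAt_id ((f:ℝ):ℂ)).const_mul c).cexp
    simpa [mul_comm] using this
  have h2 := h1.comp_ofReal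
  have h3 := h2.const_mul (x j)
  have : x j * (c * Complex.exp (c * (f:ℂ))) = x j * c * Complex.exp (c * (f:ℂ)) := by ring
  rw [this] at h3
  exact h3

lemma X_bounded (m : ℕ) (x : Fin (2 * m + 1) → ℂ) (X : ℝ → ℂ)
    (hX : ∀ f : ℝ, X f = ∑ j : Fin (2 * m + 1), x j *
      Complex.exp (2 * Real.pi * Complex.I * ((j : ℂ) - (m : ℂ)) * f)) :
    BddAbove (Set.range fun f : ℝ => ‖X f‖) := by
  refine ⟨∑ j : Fin (2*m+1), ‖x j‖, ?_⟩
  rintro y ⟨f, rfl⟩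
  simp only
  rw [hX f]
  calc ‖∑ j : Fin (2*m+1), x j *
        Complex.exp (2 * Real.pi * Complex.I * ((j : ℂ) - (m : ℂ)) * f)‖
      ≤ ∑ j : Fin (2*m+1), ‖x j *
        Complex.exp (2 * Real.pi * Complex.I * ((j : ℂ) - (m : ℂ)) * f)‖ := by
        exact norm_sum_le Finset.univ
          (fun j : Fin (2*m+1) => x j * Complex.exp (2 * Real.pi * Complex.I * ((j : ℂ) - (m : ℂ)) * f))
    _ ≤ ∑ j : Fin (2*m+1), ‖x j‖ := by
        refine Finset.sum_le_sum fun j _ => ?_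
        rw [norm_mul]
        have harg : 2 * (Real.pi:ℂ) * Complex.I * ((j : ℂ) - (m : ℂ)) * (f:ℂ) =
            ((2 * Real.pi * (j - m) * f : ℝ):ℂ) * Complex.I := by push_cast; ring
        rw [harg, Complex.norm_exp_ofReal_mul_I, mul_one]

lemma deriv_interp (m : ℕ) (x : Fin (2 * m + 1) → ℂ) (X : ℝ → ℂ)
    (hX : ∀ f : ℝ, X f = ∑ j : Fin (2 * m + 1), x j *
      Complex.exp (2 * Real.pi * Complex.I * ((j : ℂ) - (m : ℂ)) * f)) (f : ℝ) :
    deriv X f = ∑ k ∈ range (2*m), ((ga m k : ℝ):ℂ) * X (f + tt m k) := by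
  rw [(hasDerivAt_X m x X hX f).deriv]
  calc ∑ j : Fin (2*m+1), (x j * (2 * Real.pi * Complex.I * ((j : ℂ) - (m : ℂ)))) *
        Complex.exp (2 * Real.pi * Complex.I * ((j : ℂ) - (m : ℂ)) * f)
      = ∑ j : Fin (2*m+1), ∑ k ∈ range (2*m), ((ga m k : ℝ):ℂ) *
        (x j * Complex.exp (2 * Real.pi * Complex.I * ((j : ℂ) - (m : ℂ)) * ((f + tt m k : ℝ):ℂ))) := by
        refine Finset.sum_congr rfl fun j _ => ?_
        have hj2 : ((j:ℤ) - m) ≤ m := by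
          have := j.isLt
          omega
        have hin := interp ((j:ℤ) - m) (by omega) hj2
        push_cast at hin
        rw [eq_comm]
        calc ∑ k ∈ range (2*m), ((ga m k : ℝ):ℂ) *
              (x j * Complex.exp (2 * Real.pi * Complex.I * ((j : ℂ) - (m : ℂ)) * ((f + tt m k : ℝ):ℂ)))
            = ∑ k ∈ range (2*m), (((ga m k : ℝ):ℂ) *
              Complex.exp (2 * Real.pi * Complex.I * ((j : ℂ) - (m : ℂ)) * ((tt m k : ℝ):ℂ))) *
              (x j * Complex.exp (2 * Real.pi * Complex.I * ((j : ℂ) - (m : ℂ)) * (f:ℂ))) := by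
              refine Finset.sum_congr rfl fun k _ => ?_
              push_cast
              rw [show (2:ℂ) * Real.pi * Complex.I * ((j : ℂ) - (m : ℂ)) * ((f:ℂ) + ((tt m k : ℝ):ℂ)) =
                2 * Real.pi * Complex.I * ((j : ℂ) - (m : ℂ)) * (f:ℂ) +
                2 * Real.pi * Complex.I * ((j : ℂ) - (m : ℂ)) * ((tt m k : ℝ):ℂ) from by ring,
                Complex.exp_add]
              ring
          _ = (∑ k ∈ range (2*m), ((ga m k : ℝ):ℂ) *
              Complex.exp (2 * Real.pi * Complex.I * ((j : ℂ) - (m : ℂ)) * ((tt m k : ℝ):ℂ))) *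
              (x j * Complex.exp (2 * Real.pi * Complex.I * ((j : ℂ) - (m : ℂ)) * (f:ℂ))) :=
              (Finset.sum_mul _ _ _).symm
          _ = x j * (2 * Real.pi * Complex.I * ((j : ℂ) - (m : ℂ))) *
              Complex.exp (2 * Real.pi * Complex.I * ((j : ℂ) - (m : ℂ)) * (f:ℂ)) := by
              rw [hin]; ring
      _ = ∑ k ∈ range (2*m), ((ga m k : ℝ):ℂ) * X (f + tt m k) := by
        rw [Finset.sum_comm]
        refine Finset.sum_congr rfl fun k _ => ?_
        rw [hX (f + tt m k), Finset.mul_sum]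


lemma core (m : ℕ) (x : Fin (2 * m + 1) → ℂ) (X : ℝ → ℂ)
    (hX : ∀ f : ℝ, X f = ∑ j : Fin (2 * m + 1), x j *
      Complex.exp (2 * Real.pi * Complex.I * ((j : ℂ) - (m : ℂ)) * f)) :
    (⨆ f : ℝ, ‖deriv X f‖) ≤ 2 * Real.pi * m * (⨆ f : ℝ, ‖X f‖) := by
  have hbdd := X_bounded m x X hX
  set M := ⨆ f : ℝ, ‖X f‖ with hM
  have hXle : ∀ f : ℝ, ‖X f‖ ≤ M := fun f => le_ciSup hbdd f
  have hM0 : 0 ≤ M := le_trans (norm_nonneg (X 0)) (hXle 0)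
  have hpt : ∀ f : ℝ, ‖deriv X f‖ ≤ 2 * Real.pi * m * M := by
    intro f
    rw [deriv_interp m x X hX f]
    calc ‖∑ k ∈ range (2*m), ((ga m k : ℝ):ℂ) * X (f + tt m k)‖
        ≤ ∑ k ∈ range (2*m), ‖((ga m k : ℝ):ℂ) * X (f + tt m k)‖ := by
          exact norm_sum_le (range (2*m))
            (fun k => ((ga m k : ℝ):ℂ) * X (f + tt m k))
      _ ≤ ∑ k ∈ range (2*m), |ga m k| * M := by
          refine Finset.sum_le_sum fun k _ => ?_
          rw [norm_mul, Complex.norm_real, Real.norm_eq_abs]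
          exact mul_le_mul_of_nonneg_left (hXle _) (abs_nonneg _)
      _ = 2 * Real.pi * m * M := by rw [← Finset.sum_mul, ga_sum]
  exact Real.iSup_le hpt (by positivity)

end BernAux
end

open BernAux in
/-- Bernstein's inequality for trigonometric polynomials of degree at most `m`:
`‖X'‖_∞ ≤ 2πm ‖X‖_∞` and consequently `‖X''‖_∞ ≤ (2πm)² ‖X‖_∞`. -/
theorem bernstein_trig (m : ℕ) (x : Fin (2 * m + 1) → ℂ) (X : ℝ → ℂ)
    (hX : ∀ f : ℝ, X f = ∑ j : Fin (2 * m + 1), x j *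
      Complex.exp (2 * Real.pi * Complex.I * ((j : ℂ) - (m : ℂ)) * f)) :
    (⨆ f : ℝ, ‖deriv X f‖) ≤ 2 * Real.pi * m * (⨆ f : ℝ, ‖X f‖) ∧
    (⨆ f : ℝ, ‖deriv (deriv X) f‖) ≤
      (2 * Real.pi * m) ^ 2 * (⨆ f : ℝ, ‖X f‖) := by
  have h1 := core m x X hX
  refine ⟨h1, ?_⟩
  have hX' : ∀ f : ℝ, deriv X f = ∑ j : Fin (2 * m + 1),
      (x j * (2 * Real.pi * Complex.I * ((j : ℂ) - (m : ℂ)))) *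
      Complex.exp (2 * Real.pi * Complex.I * ((j : ℂ) - (m : ℂ)) * f) :=
    fun f => (hasDerivAt_X m x X hX f).deriv
  have h2 := core m (fun j => x j * (2 * Real.pi * Complex.I * ((j : ℂ) - (m : ℂ)))) (deriv X) hX'
  calc (⨆ f : ℝ, ‖deriv (deriv X) f‖)
      ≤ 2 * Real.pi * m * (⨆ f : ℝ, ‖deriv X f‖) := h2
    _ ≤ 2 * Real.pi * m * (2 * Real.pi * m * (⨆ f : ℝ, ‖X f‖)) :=
        mul_le_mul_of_nonneg_left h1 (by positivity)
    _ = (2 * Real.pi * m) ^ 2 * (⨆ f : ℝ, ‖X f‖) := by ring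
end

section
/- Let ν be a finite complex measure on [0,1], let T = {f_1,...,f_k} with pairwise disjoint neighborhoods N_j ⊆ [0,1] containing f_j, and let F = [0,1] \ ∪_j N_j. For any trigonometric polynomial X of degree at most m, |∫_0^1 X(f) ν(df)| ≤ ‖X‖_∞ ( ∫_F |ν|(df) + Σ_j |∫_{N_j} ν(df)| + Σ_j (2πm)|∫_{N_j}(f−f_j)ν(df)| + Σ_j ((2πm)^2/2)∫_{N_j}(f−f_j)^2 |ν|(df) ). -/
open Complex Finset

noncomputable section BernAux

/-- angle α_l = (2l+1)π/(4m) -/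
def bernA (m l : ℕ) : ℝ := (2 * l + 1) * Real.pi / (4 * m)

/-- w_l = e^{2 i α_l}, a root of w^{2m} = -1 -/
def bernW (m l : ℕ) : ℂ := Complex.exp ((2 * bernA m l : ℝ) * Complex.I)

variable {m : ℕ} (hm : 1 ≤ m)

lemma bernW_ne_zero (l : ℕ) : bernW m l ≠ 0 := Complex.exp_ne_zero _

lemma bernW_pow (l j : ℕ) : bernW m l ^ j = Complex.exp ((j * (2 * bernA m l) : ℝ) * Complex.I) := by
  rw [bernW, ← Complex.exp_nat_mul]
  congr 1
  push_cast
  ring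

include hm

lemma two_bernA (l : ℕ) : (2 * bernA m l : ℝ) = (2 * l + 1) * Real.pi / (2 * m) := by
  have : (m : ℝ) ≠ 0 := Nat.cast_ne_zero.mpr (by omega)
  rw [bernA]
  field_simp
  ring

lemma bernW_pow_two_mul (l : ℕ) : bernW m l ^ (2 * m) = -1 := by
  rw [bernW_pow, two_bernA hm]
  have : ((2 * m : ℕ) * ((2 * l + 1) * Real.pi / (2 * m)) : ℝ) = (2 * l + 1) * Real.pi := by
    have : (m : ℝ) ≠ 0 := Nat.cast_ne_zero.mpr (by omega)
    push_cast
    field_simp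
  rw [this]
  have : (((2 * l + 1) * Real.pi : ℝ) : ℂ) * Complex.I = (2 * l + 1) * (Real.pi * Complex.I) := by
    push_cast; ring
  rw [show ((2 * (l:ℂ) + 1) * (↑Real.pi * Complex.I)) = ((2 * l + 1 : ℕ) : ℂ) * (↑Real.pi * Complex.I) by push_cast; ring] at this
  rw [this, Complex.exp_nat_mul, Complex.exp_pi_mul_I]
  rw [pow_succ, pow_mul]
  simp

lemma bernW_ne_one (l : ℕ) : bernW m l ≠ 1 := by
  intro h
  have := bernW_pow_two_mul hm l
  rw [h, one_pow] at this
  norm_num at this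

lemma bernW_pow_m (l : ℕ) : bernW m l ^ m = (-1) ^ l * Complex.I := by
  rw [bernW_pow, two_bernA hm]
  have : ((m : ℕ) * ((2 * l + 1) * Real.pi / (2 * m)) : ℝ) = (2 * l + 1) * (Real.pi / 2) := by
    have : (m : ℝ) ≠ 0 := Nat.cast_ne_zero.mpr (by omega)
    field_simp
  rw [this]
  have : (((2 * l + 1) * (Real.pi / 2) : ℝ) : ℂ) * Complex.I = (2 * l + 1) * ((Real.pi / 2 : ℝ) * Complex.I) := by
    push_cast; ring
  rw [show ((2 * (l:ℂ) + 1) * ((Real.pi / 2 : ℝ) * Complex.I)) = ((2 * l + 1 : ℕ) : ℂ) * ((Real.pi / 2 : ℝ) * Complex.I) by push_cast; ring] at this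
  rw [this, Complex.exp_nat_mul]
  have hexp : Complex.exp ((Real.pi / 2 : ℝ) * Complex.I) = Complex.I := by
    rw [Complex.exp_mul_I, ← Complex.ofReal_cos, ← Complex.ofReal_sin,
      Real.cos_pi_div_two, Real.sin_pi_div_two]
    simp
  rw [hexp, pow_succ, pow_mul, Complex.I_sq]

lemma bernW_inv (l : ℕ) (hl : l < 2 * m) : (bernW m l)⁻¹ = bernW m (2 * m - 1 - l) := by
  rw [bernW, bernW, ← Complex.exp_neg]
  rw [two_bernA hm, two_bernA hm]
  have hcast : ((2 * (2 * m - 1 - l) + 1 : ℕ) : ℝ) = 4 * m - 2 * l - 1 := by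
    rw [show (2 * (2 * m - 1 - l) + 1 : ℕ) = 4 * m - (2 * l + 1) by omega,
      Nat.cast_sub (by omega : 2 * l + 1 ≤ 4 * m)]
    push_cast
    ring
  rw [show ((2 * ((2 * m - 1 - l) : ℕ) + 1 : ℝ)) = ((2 * (2 * m - 1 - l) + 1 : ℕ) : ℝ) by push_cast; ring, hcast]
  have hm' : (m : ℝ) ≠ 0 := Nat.cast_ne_zero.mpr (by omega)
  have harg : ((4 * m - 2 * l - 1) * Real.pi / (2 * m) : ℝ) = 2 * Real.pi - (2 * l + 1) * Real.pi / (2 * m) := by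
    field_simp
    ring
  rw [harg]
  rw [show (((2 * Real.pi - (2 * l + 1) * Real.pi / (2 * m) : ℝ)) : ℂ) * Complex.I
      = 2 * Real.pi * Complex.I + (-(((2 * l + 1) * Real.pi / (2 * m) : ℝ) * Complex.I)) by push_cast; ring]
  rw [Complex.exp_add, Complex.exp_two_pi_mul_I, one_mul]

end BernAux

section BernSums
open Complex Finset

variable {m : ℕ} (hm : 1 ≤ m)

lemma bernA_pos (hm : 1 ≤ m) (l : ℕ) : 0 < bernA m l := by
  apply div_pos
  · positivity
  · positivity

lemma bernA_lt_pi (hm : 1 ≤ m) (l : ℕ) (hl : l < 2 * m) : bernA m l < Real.pi := by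
  rw [bernA, div_lt_iff₀ (by positivity)]
  have h1 : (2 * l + 1 : ℝ) < 4 * m := by
    have : (2 * l + 1 : ℕ) < 4 * m := by omega
    exact_mod_cast this
  nlinarith [Real.pi_pos]

lemma sin_bernA_pos (hm : 1 ≤ m) (l : ℕ) (hl : l < 2 * m) : 0 < Real.sin (bernA m l) :=
  Real.sin_pos_of_pos_of_lt_pi (bernA_pos hm l) (bernA_lt_pi hm l hl)

lemma bernW_sub_one_sq (m l : ℕ) :
    (bernW m l - 1) ^ 2 = -4 * ((Real.sin (bernA m l) : ℝ) : ℂ) ^ 2 * bernW m l := by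
  set α := bernA m l with hα
  set e := Complex.exp ((α : ℝ) * Complex.I) with he
  have he0 : e ≠ 0 := Complex.exp_ne_zero _
  have hw : bernW m l = e ^ 2 := by
    rw [bernW, he, ← Complex.exp_nat_mul]
    congr 1
    push_cast
    ring
  have hsin : ((Real.sin α : ℝ) : ℂ) = (e⁻¹ - e) * Complex.I / 2 := by
    rw [Complex.ofReal_sin, Complex.sin]
    rw [he, ← Complex.exp_neg]
    congr 2
    ring_nf
  have hIsq : ((e⁻¹ - e) * Complex.I / 2) ^ 2 = -((e⁻¹ - e) ^ 2) / 4 := by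
    rw [div_pow, mul_pow, Complex.I_sq]
    ring
  rw [hw, hsin, hIsq]
  field_simp
  ring

lemma bernW_div_sq (hm : 1 ≤ m) (l : ℕ) (hl : l < 2 * m) :
    bernW m l / (bernW m l - 1) ^ 2 = -(1 / (4 * ((Real.sin (bernA m l) : ℝ) : ℂ) ^ 2)) := by
  have hs : ((Real.sin (bernA m l) : ℝ) : ℂ) ≠ 0 := by
    exact_mod_cast (sin_bernA_pos hm l hl).ne'
  have hw0 : bernW m l ≠ 0 := bernW_ne_zero l
  rw [bernW_sub_one_sq m l,
    show (-4 * ((Real.sin (bernA m l) : ℝ) : ℂ) ^ 2 * bernW m l)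
      = -(bernW m l * (4 * ((Real.sin (bernA m l) : ℝ) : ℂ) ^ 2)) by ring,
    div_neg, neg_inj, div_mul_eq_div_div, div_self hw0]

lemma pair1 {w : ℂ} (h0 : w ≠ 0) (h1 : w ≠ 1) :
    w / (w - 1) + w⁻¹ / (w⁻¹ - 1) = 1 := by
  have h1' : w⁻¹ - 1 ≠ 0 := by
    rw [sub_ne_zero]
    simpa [inv_eq_one] using h1
  have h2' : w - 1 ≠ 0 := sub_ne_zero.mpr h1
  have h3 : (1 : ℂ) - w ≠ 0 := sub_ne_zero.mpr (Ne.symm h1)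
  field_simp
  ring

lemma pair2 {w : ℂ} {m : ℕ} (h0 : w ≠ 0) (h1 : w ≠ 1) (h2m : w ^ (2 * m) = -1) :
    (w⁻¹) ^ (m + 1) / (w⁻¹ - 1) ^ 2 = -(w ^ (m + 1) / (w - 1) ^ 2) := by
  have h1' : w⁻¹ - 1 ≠ 0 := by
    rw [sub_ne_zero]
    simpa [inv_eq_one] using h1
  have h2' : w - 1 ≠ 0 := sub_ne_zero.mpr h1
  have h3 : (1 : ℂ) - w ≠ 0 := sub_ne_zero.mpr (Ne.symm h1)
  have key : w ^ (m + 1) * w ^ (m + 1) = -(w ^ 2) := by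
    have : w ^ (m + 1) * w ^ (m + 1) = w ^ (2 * m) * w ^ 2 := by ring
    rw [this, h2m]; ring
  have hwi : (w⁻¹ - 1) ^ 2 = (w - 1) ^ 2 / w ^ 2 := by
    field_simp
    ring
  rw [inv_pow, hwi, div_div_eq_mul_div, ← neg_div]
  congr 1
  rw [inv_mul_eq_div, div_eq_iff (pow_ne_zero _ h0)]
  linear_combination key

/-- involution l ↦ 2m-1-l reindexing -/
lemma sum_flip {β : Type*} [AddCommMonoid β] (m : ℕ) (f : ℕ → β) :
    ∑ l ∈ range (2 * m), f l = ∑ l ∈ range (2 * m), f (2 * m - 1 - l) := by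
  rw [← Finset.sum_range_reflect]

end BernSums

section BernSums2
open Complex Finset

variable {m : ℕ}

lemma sumT1 (hm : 1 ≤ m) :
    ∑ l ∈ range (2 * m), bernW m l / (bernW m l - 1) = (m : ℂ) := by
  set f : ℕ → ℂ := fun l => bernW m l / (bernW m l - 1) with hf
  have hflip : ∑ l ∈ range (2 * m), f l = ∑ l ∈ range (2 * m), f (2 * m - 1 - l) :=
    sum_flip m f
  have hpair : ∀ l ∈ range (2 * m), f l + f (2 * m - 1 - l) = 1 := by
    intro l hl
    rw [mem_range] at hl
    have : f (2 * m - 1 - l) = (bernW m l)⁻¹ / ((bernW m l)⁻¹ - 1) := by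
      rw [hf]
      simp only
      rw [← bernW_inv hm l hl]
    rw [this]
    exact pair1 (bernW_ne_zero l) (bernW_ne_one hm l)
  have h2 : (2 : ℂ) * ∑ l ∈ range (2 * m), f l = 2 * m := by
    calc (2:ℂ) * ∑ l ∈ range (2 * m), f l
        = ∑ l ∈ range (2 * m), f l + ∑ l ∈ range (2 * m), f (2 * m - 1 - l) := by
          rw [← hflip]; ring
      _ = ∑ l ∈ range (2 * m), (f l + f (2 * m - 1 - l)) := by rw [← Finset.sum_add_distrib]
      _ = ∑ l ∈ range (2 * m), (1 : ℂ) := Finset.sum_congr rfl hpair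
      _ = 2 * m := by simp
  have := mul_left_cancel₀ (two_ne_zero (α := ℂ)) h2
  exact this

lemma sumSm1 (hm : 1 ≤ m) :
    ∑ l ∈ range (2 * m), bernW m l ^ (m + 1) / (bernW m l - 1) ^ 2 = 0 := by
  set f : ℕ → ℂ := fun l => bernW m l ^ (m + 1) / (bernW m l - 1) ^ 2 with hf
  have hflip : ∑ l ∈ range (2 * m), f l = ∑ l ∈ range (2 * m), f (2 * m - 1 - l) :=
    sum_flip m f
  have hpair : ∀ l ∈ range (2 * m), f (2 * m - 1 - l) = -f l := by
    intro l hl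
    rw [mem_range] at hl
    have : f (2 * m - 1 - l) = (bernW m l)⁻¹ ^ (m + 1) / ((bernW m l)⁻¹ - 1) ^ 2 := by
      rw [hf]
      simp only
      rw [← bernW_inv hm l hl]
    rw [this]
    exact pair2 (bernW_ne_zero l) (bernW_ne_one hm l) (bernW_pow_two_mul hm l)
  have h2 : ∑ l ∈ range (2 * m), f l = -∑ l ∈ range (2 * m), f l := by
    calc ∑ l ∈ range (2 * m), f l = ∑ l ∈ range (2 * m), f (2 * m - 1 - l) := hflip
      _ = ∑ l ∈ range (2 * m), (-f l) := Finset.sum_congr rfl hpair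
      _ = -∑ l ∈ range (2 * m), f l := by rw [Finset.sum_neg_distrib]
  have : (2 : ℂ) * ∑ l ∈ range (2 * m), f l = 0 := by linear_combination h2
  simpa using (mul_eq_zero.mp this).resolve_left two_ne_zero

lemma sumPow (hm : 1 ≤ m) (j : ℕ) (h1 : 1 ≤ j) (h2 : j < 2 * m) :
    ∑ l ∈ range (2 * m), bernW m l ^ j = 0 := by
  have hm' : (m : ℝ) ≠ 0 := Nat.cast_ne_zero.mpr (by omega)
  set q : ℂ := Complex.exp (((j : ℝ) * Real.pi / m : ℝ) * Complex.I) with hq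
  set c : ℂ := Complex.exp (((j : ℝ) * Real.pi / (2 * m) : ℝ) * Complex.I) with hc
  have hterm : ∀ l, bernW m l ^ j = c * q ^ l := by
    intro l
    rw [bernW_pow, two_bernA hm, hq, hc, ← Complex.exp_nat_mul, ← Complex.exp_add]
    congr 1
    push_cast
    have hmc : (m : ℂ) ≠ 0 := Nat.cast_ne_zero.mpr (by omega)
    have : (j : ℂ) * ((2 * l + 1) * (Real.pi : ℂ) / (2 * m))
        = (j : ℂ) * Real.pi / (2 * m) + l * ((j : ℂ) * Real.pi / m) := by
      field_simp
      ring
    linear_combination Complex.I * this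
  have hq1 : q ≠ 1 := by
    rw [hq]
    intro hcon
    rw [Complex.exp_eq_one_iff] at hcon
    obtain ⟨n, hn⟩ := hcon
    have : ((j : ℝ) * Real.pi / m : ℝ) = (n : ℝ) * (2 * Real.pi) := by
      have hI : ((((j : ℝ) * Real.pi / m : ℝ)) : ℂ) = (n : ℂ) * (2 * Real.pi) := by
        have := mul_right_cancel₀ Complex.I_ne_zero (by
          rw [hn]; ring_nf : ((((j : ℝ) * Real.pi / m : ℝ)) : ℂ) * Complex.I
            = ((n : ℂ) * (2 * Real.pi)) * Complex.I)
        exact this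
      exact_mod_cast hI
    have hj : (j : ℝ) = 2 * n * m := by
      field_simp at this
      nlinarith [Real.pi_pos, this]
    have hjz : (j : ℤ) = 2 * n * m := by exact_mod_cast hj
    have hmz : (1 : ℤ) ≤ m := by exact_mod_cast hm
    have hjz1 : (1 : ℤ) ≤ j := by exact_mod_cast h1
    have hjz2 : (j : ℤ) < 2 * m := by exact_mod_cast h2
    rcases le_or_gt n 0 with hn0 | hn0
    · nlinarith
    · have hn1 : (1 : ℤ) ≤ n := hn0
      nlinarith
  have hq2m : q ^ (2 * m) = 1 := by
    rw [hq, ← Complex.exp_nat_mul]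
    have : ((2 * m : ℕ) : ℂ) * (((j : ℝ) * Real.pi / m : ℝ) * Complex.I)
        = (j : ℂ) * (2 * Real.pi * Complex.I) := by
      have hmc : (m : ℂ) ≠ 0 := Nat.cast_ne_zero.mpr (by omega)
      push_cast
      field_simp
    rw [this, Complex.exp_nat_mul, Complex.exp_two_pi_mul_I, one_pow]
  calc ∑ l ∈ range (2 * m), bernW m l ^ j = ∑ l ∈ range (2 * m), c * q ^ l :=
        Finset.sum_congr rfl fun l _ => hterm l
    _ = c * ((q ^ (2 * m) - 1) / (q - 1)) := by rw [← Finset.mul_sum, geom_sum_eq hq1]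
    _ = 0 := by rw [hq2m]; simp

end BernSums2

section BernSums3
open Complex Finset

variable {m : ℕ}

lemma sumT (hm : 1 ≤ m) : ∀ j : ℕ, 1 ≤ j → j ≤ 2 * m →
    ∑ l ∈ range (2 * m), bernW m l ^ j / (bernW m l - 1) = (m : ℂ) := by
  intro j
  induction j with
  | zero => omega
  | succ n ih =>
    intro _ hn2
    rcases Nat.eq_zero_or_pos n with hn | hn
    · subst hn
      simpa using sumT1 hm
    · have hsplit : ∀ l ∈ range (2 * m),
          bernW m l ^ (n + 1) / (bernW m l - 1)
            = bernW m l ^ n + bernW m l ^ n / (bernW m l - 1) := by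
        intro l _
        have hne : bernW m l - 1 ≠ 0 := sub_ne_zero.mpr (bernW_ne_one hm l)
        field_simp
        ring
      rw [Finset.sum_congr rfl hsplit, Finset.sum_add_distrib,
        sumPow hm n hn (by omega), ih hn (by omega), zero_add]

lemma sumS_succ (hm : 1 ≤ m) (j : ℕ) :
    ∑ l ∈ range (2 * m), bernW m l ^ (j + 1) / (bernW m l - 1) ^ 2
      = ∑ l ∈ range (2 * m), bernW m l ^ j / (bernW m l - 1) ^ 2
        + ∑ l ∈ range (2 * m), bernW m l ^ j / (bernW m l - 1) := by
  rw [← Finset.sum_add_distrib]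
  apply Finset.sum_congr rfl
  intro l _
  have hne : bernW m l - 1 ≠ 0 := sub_ne_zero.mpr (bernW_ne_one hm l)
  field_simp
  ring

lemma sumS_up (hm : 1 ≤ m) : ∀ t : ℕ, t ≤ m →
    ∑ l ∈ range (2 * m), bernW m l ^ (m + 1 + t) / (bernW m l - 1) ^ 2 = (t : ℂ) * m := by
  intro t
  induction t with
  | zero => simpa using sumSm1 hm
  | succ s ih =>
    intro hs
    have h1 : m + 1 + (s + 1) = (m + 1 + s) + 1 := by omega
    rw [h1, sumS_succ hm, ih (by omega), sumT hm (m + 1 + s) (by omega) (by omega)]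
    push_cast
    ring

lemma sumS_down (hm : 1 ≤ m) : ∀ t : ℕ, t ≤ m →
    ∑ l ∈ range (2 * m), bernW m l ^ (m + 1 - t) / (bernW m l - 1) ^ 2 = -((t : ℂ) * m) := by
  intro t
  induction t with
  | zero => simpa using sumSm1 hm
  | succ s ih =>
    intro hs
    have h1 : m + 1 - s = (m + 1 - (s + 1)) + 1 := by omega
    have h2 := ih (by omega)
    rw [h1, sumS_succ hm] at h2
    have h3 := sumT hm (m + 1 - (s + 1)) (by omega) (by omega)
    rw [h3] at h2
    have : ∑ l ∈ range (2 * m), bernW m l ^ (m + 1 - (s + 1)) / (bernW m l - 1) ^ 2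
        = -((s : ℂ) * m) - m := by linear_combination h2
    rw [this]
    push_cast
    ring

lemma sumS_eq (hm : 1 ≤ m) (j : ℕ) (hj : j ≤ 2 * m) :
    ∑ l ∈ range (2 * m), bernW m l ^ (j + 1) / (bernW m l - 1) ^ 2 = ((j : ℂ) - m) * m := by
  rcases le_or_gt m j with hc | hc
  · have h1 : j + 1 = m + 1 + (j - m) := by omega
    rw [h1, sumS_up hm (j - m) (by omega)]
    have : ((j - m : ℕ) : ℂ) = (j : ℂ) - m := by
      push_cast [Nat.cast_sub hc]
      ring
    rw [this]
  · have h1 : j + 1 = m + 1 - (m - j) := by omega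
    rw [h1, sumS_down hm (m - j) (by omega)]
    have : ((m - j : ℕ) : ℂ) = (m : ℂ) - j := by
      push_cast [Nat.cast_sub hc.le]
      ring
    rw [this]
    ring

lemma csc_sum (hm : 1 ≤ m) :
    ∑ l ∈ range (2 * m), (1 / Real.sin (bernA m l) ^ 2 : ℝ) = 4 * m ^ 2 := by
  have hC : ∑ l ∈ range (2 * m), ((1 / Real.sin (bernA m l) ^ 2 : ℝ) : ℂ) = 4 * (m : ℂ) ^ 2 := by
    have hterm : ∀ l ∈ range (2 * m),
        ((1 / Real.sin (bernA m l) ^ 2 : ℝ) : ℂ)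
          = -4 * (bernW m l ^ (0 + 1) / (bernW m l - 1) ^ 2) := by
      intro l hl
      rw [mem_range] at hl
      rw [zero_add, pow_one, bernW_div_sq hm l hl]
      push_cast
      ring
    rw [Finset.sum_congr rfl hterm, ← Finset.mul_sum, sumS_eq hm 0 (by omega)]
    push_cast
    ring
  have := hC
  push_cast at this
  exact_mod_cast this

lemma riesz_id (hm : 1 ≤ m) (j : ℕ) (hj : j ≤ 2 * m) :
    ∑ l ∈ range (2 * m),
        ((Real.pi / (2 * m) * (-1) ^ l / Real.sin (bernA m l) ^ 2 : ℝ) : ℂ)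
          * (bernW m l ^ j * (bernW m l ^ m)⁻¹)
      = 2 * Real.pi * Complex.I * ((j : ℂ) - m) := by
  have hterm : ∀ l ∈ range (2 * m),
      ((Real.pi / (2 * m) * (-1) ^ l / Real.sin (bernA m l) ^ 2 : ℝ) : ℂ)
          * (bernW m l ^ j * (bernW m l ^ m)⁻¹)
        = (Real.pi / (2 * m) : ℝ) * (4 * Complex.I) * (bernW m l ^ (j + 1) / (bernW m l - 1) ^ 2) := by
    intro l hl
    rw [mem_range] at hl
    have hs : ((Real.sin (bernA m l) : ℝ) : ℂ) ≠ 0 := by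
      exact_mod_cast (sin_bernA_pos hm l hl).ne'
    have hdiv : (1 : ℂ) / ((Real.sin (bernA m l) : ℝ) : ℂ) ^ 2
        = -4 * (bernW m l / (bernW m l - 1) ^ 2) := by
      rw [bernW_div_sq hm l hl]
      ring
    have hwm : bernW m l ^ m = (-1) ^ l * Complex.I := bernW_pow_m hm l
    have hwne : bernW m l - 1 ≠ 0 := sub_ne_zero.mpr (bernW_ne_one hm l)
    have hinv : ((-1 : ℂ) ^ l * Complex.I)⁻¹ = (-1 : ℂ) ^ l * (-Complex.I) := by
      rw [mul_inv, Complex.inv_I]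
      congr 1
      rw [← inv_pow, inv_neg, inv_one]
    have hu : ((-1 : ℂ) ^ l) * ((-1 : ℂ) ^ l) = 1 := by
      rw [← pow_add, show l + l = 2 * l by ring, pow_mul]
      norm_num
    push_cast
    rw [hwm, hinv]
    have hkey := bernW_sub_one_sq m l
    push_cast at hkey
    push_cast at hs
    have h2 : Complex.sin ((bernA m l : ℂ)) ^ 2 ≠ 0 := pow_ne_zero _ hs
    have hwne2 : (bernW m l - 1) ^ 2 ≠ 0 := pow_ne_zero _ hwne
    have step1 : (Real.pi : ℂ) / (2 * (m : ℂ)) * (-1 : ℂ) ^ l / Complex.sin ((bernA m l : ℂ)) ^ 2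
          * (bernW m l ^ j * ((-1 : ℂ) ^ l * -Complex.I))
        = ((-1 : ℂ) ^ l * (-1 : ℂ) ^ l)
          * ((Real.pi : ℂ) / (2 * (m : ℂ)) * -Complex.I * bernW m l ^ j
            / Complex.sin ((bernA m l : ℂ)) ^ 2) := by ring
    rw [step1, hu, one_mul,
      show (Real.pi : ℂ) / (2 * (m : ℂ)) * (4 * Complex.I) * (bernW m l ^ (j + 1) / (bernW m l - 1) ^ 2)
        = (Real.pi : ℂ) / (2 * (m : ℂ)) * (4 * Complex.I) * bernW m l ^ (j + 1) / (bernW m l - 1) ^ 2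
        from (mul_div_assoc _ _ _).symm,
      div_eq_div_iff h2 hwne2]
    linear_combination (-((Real.pi : ℂ) / (2 * (m : ℂ))) * Complex.I * bernW m l ^ j) * hkey
  rw [Finset.sum_congr rfl hterm, ← Finset.mul_sum, sumS_eq hm j hj]
  have hmc : (m : ℂ) ≠ 0 := Nat.cast_ne_zero.mpr (by omega)
  push_cast
  field_simp
  ring

lemma csum (hm : 1 ≤ m) :
    ∑ l ∈ range (2 * m), |Real.pi / (2 * m) * (-1) ^ l / Real.sin (bernA m l) ^ 2|
      = 2 * Real.pi * m := by
  have hterm : ∀ l ∈ range (2 * m),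
      |Real.pi / (2 * m) * (-1) ^ l / Real.sin (bernA m l) ^ 2|
        = Real.pi / (2 * m) * (1 / Real.sin (bernA m l) ^ 2) := by
    intro l hl
    rw [mem_range] at hl
    rw [abs_div, abs_mul, _root_.abs_pow, abs_neg, abs_one, one_pow, mul_one,
      abs_of_pos (show (0:ℝ) < Real.pi / (2 * m) by positivity),
      abs_of_pos (pow_pos (sin_bernA_pos hm l hl) 2)]
    ring
  rw [Finset.sum_congr rfl hterm, ← Finset.mul_sum, csc_sum hm]
  have hm' : (m : ℝ) ≠ 0 := Nat.cast_ne_zero.mpr (by omega)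
  field_simp
  ring

end BernSums3

noncomputable section BernStein
open Complex Finset

/-- shift δ_l = (2l+1)/(4m) -/
def bernD (m l : ℕ) : ℝ := (2 * l + 1) / (4 * m)

/-- coefficient c_l of the Riesz interpolation formula -/
def bernC (m l : ℕ) : ℝ := Real.pi / (2 * m) * (-1) ^ l / Real.sin (bernA m l) ^ 2

lemma bern_exp_split {m : ℕ} (hm : 1 ≤ m) (t : ℝ) (j : Fin (2 * m + 1)) (l : ℕ) :
    Complex.exp (2 * Real.pi * Complex.I * ((j : ℂ) - (m : ℂ)) * ((t + bernD m l : ℝ) : ℂ))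
      = Complex.exp (2 * Real.pi * Complex.I * ((j : ℂ) - (m : ℂ)) * (t : ℂ))
        * (bernW m l ^ (j : ℕ) * (bernW m l ^ m)⁻¹) := by
  have hmr : (m : ℝ) ≠ 0 := Nat.cast_ne_zero.mpr (by omega)
  have hw : ∀ n : ℕ, bernW m l ^ n = Complex.exp ((n : ℂ) * (((2 * bernA m l : ℝ) : ℂ) * Complex.I)) := by
    intro n
    rw [bernW, ← Complex.exp_nat_mul]
  rw [hw, hw, ← Complex.exp_neg, ← Complex.exp_add, ← Complex.exp_add]
  congr 1
  have ha : (2 * bernA m l : ℝ) = 2 * Real.pi * bernD m l := by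
    rw [bernA, bernD]
    field_simp
  rw [ha]
  push_cast
  ring

lemma bernstein_step (m : ℕ) (x : Fin (2 * m + 1) → ℂ) (C : ℝ)
    (hC : ∀ g : ℝ, ‖∑ j : Fin (2 * m + 1), x j *
      Complex.exp (2 * Real.pi * Complex.I * ((j : ℂ) - (m : ℂ)) * (g : ℂ))‖ ≤ C) :
    ∀ t : ℝ, ‖∑ j : Fin (2 * m + 1), x j * (2 * Real.pi * Complex.I * ((j : ℂ) - (m : ℂ))) *
      Complex.exp (2 * Real.pi * Complex.I * ((j : ℂ) - (m : ℂ)) * (t : ℂ))‖ ≤ 2 * Real.pi * m * C := by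
  intro t
  rcases Nat.eq_zero_or_pos m with h0 | hm
  · subst h0
    have hz : (∑ j : Fin (2 * 0 + 1), x j * (2 * Real.pi * Complex.I * ((j : ℂ) - ((0 : ℕ) : ℂ))) *
        Complex.exp (2 * Real.pi * Complex.I * ((j : ℂ) - ((0 : ℕ) : ℂ)) * (t : ℂ))) = 0 := by
      apply Finset.sum_eq_zero
      intro j _
      have hj : (j : ℕ) = 0 := by omega
      simp [hj]
    rw [hz]
    simp
  · -- Riesz interpolation formula
    have key : (∑ j : Fin (2 * m + 1), x j * (2 * Real.pi * Complex.I * ((j : ℂ) - (m : ℂ))) *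
          Complex.exp (2 * Real.pi * Complex.I * ((j : ℂ) - (m : ℂ)) * (t : ℂ)))
        = ∑ l ∈ range (2 * m), ((bernC m l : ℝ) : ℂ) *
            (∑ j : Fin (2 * m + 1), x j *
              Complex.exp (2 * Real.pi * Complex.I * ((j : ℂ) - (m : ℂ)) * ((t + bernD m l : ℝ) : ℂ))) := by
      have step1 : ∀ l ∈ range (2 * m), ((bernC m l : ℝ) : ℂ) *
            (∑ j : Fin (2 * m + 1), x j *
              Complex.exp (2 * Real.pi * Complex.I * ((j : ℂ) - (m : ℂ)) * ((t + bernD m l : ℝ) : ℂ)))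
          = ∑ j : Fin (2 * m + 1), (x j *
              Complex.exp (2 * Real.pi * Complex.I * ((j : ℂ) - (m : ℂ)) * (t : ℂ)))
              * (((bernC m l : ℝ) : ℂ) * (bernW m l ^ (j : ℕ) * (bernW m l ^ m)⁻¹)) := by
        intro l _
        rw [Finset.mul_sum]
        apply Finset.sum_congr rfl
        intro j _
        rw [bern_exp_split hm t j l]
        ring
      rw [Finset.sum_congr rfl step1, Finset.sum_comm]
      apply Finset.sum_congr rfl
      intro j _
      rw [← Finset.mul_sum]
      simp only [bernC]
      rw [riesz_id hm (j : ℕ) (by omega)]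
      ring
    rw [key]
    calc ‖∑ l ∈ range (2 * m), ((bernC m l : ℝ) : ℂ) * _‖
        ≤ ∑ l ∈ range (2 * m), ‖((bernC m l : ℝ) : ℂ) *
            (∑ j : Fin (2 * m + 1), x j *
              Complex.exp (2 * Real.pi * Complex.I * ((j : ℂ) - (m : ℂ)) * ((t + bernD m l : ℝ) : ℂ)))‖ :=
          norm_sum_le _ _
      _ ≤ ∑ l ∈ range (2 * m), |bernC m l| * C := by
          apply Finset.sum_le_sum
          intro l _
          rw [norm_mul, Complex.norm_real, Real.norm_eq_abs]
          exact mul_le_mul_of_nonneg_left (hC _) (abs_nonneg _)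
      _ = 2 * Real.pi * m * C := by
          rw [← Finset.sum_mul]
          have : ∑ l ∈ range (2 * m), |bernC m l| = 2 * Real.pi * m := csum hm
          rw [this]

end BernStein

section TaylorPart
open Complex Set

lemma hasDerivAt_cexp_mul (K : ℂ) (t : ℝ) :
    HasDerivAt (fun s : ℝ => Complex.exp (K * (s : ℂ))) (K * Complex.exp (K * (t : ℂ))) t := by
  have h1 : HasDerivAt (fun s : ℝ => (s : ℂ)) 1 t := by
    simpa using (hasDerivAt_id t).ofReal_comp
  have h2 := (h1.const_mul K).cexp
  simpa [mul_comm] using h2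

/-- Second-order Taylor bound, case b ≥ a. -/
lemma taylor_half {g g1 g2 : ℝ → ℂ} (hg : ∀ t, HasDerivAt g (g1 t) t)
    (hg1 : ∀ t, HasDerivAt g1 (g2 t) t) {B : ℝ} (hB : ∀ t, ‖g2 t‖ ≤ B)
    {a b : ℝ} (hab : a ≤ b) :
    ‖g b - g a - g1 a * ((b : ℂ) - (a : ℂ))‖ ≤ B * (b - a) ^ 2 / 2 := by
  have hlip : ∀ u v : ℝ, ‖g1 u - g1 v‖ ≤ B * |u - v| := by
    intro u v
    have := Convex.norm_image_sub_le_of_norm_hasDerivWithin_le (f := g1) (f' := g2) (s := (univ : Set ℝ))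
      (fun x _ => (hg1 x).hasDerivWithinAt) (fun x _ => hB x) convex_univ (mem_univ v) (mem_univ u)
    simpa [Real.norm_eq_abs] using this
  set φ : ℝ → ℂ := fun t => g t - g a - g1 a * ((t : ℂ) - (a : ℂ)) with hφ
  have hφd : ∀ t, HasDerivAt φ (g1 t - g1 a) t := by
    intro t
    have hlin : HasDerivAt (fun s : ℝ => g1 a * ((s : ℂ) - (a : ℂ))) (g1 a) t := by
      have h1 : HasDerivAt (fun s : ℝ => (s : ℂ)) 1 t := by
        simpa using (hasDerivAt_id t).ofReal_comp
      have h2 : HasDerivAt (fun s : ℝ => (s : ℂ) - (a : ℂ)) 1 t := h1.sub_const _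
      simpa using h2.const_mul (g1 a)
    exact ((hg t).sub_const (g a)).sub hlin
  have key := image_norm_le_of_norm_deriv_right_le_deriv_boundary
    (f := φ) (f' := fun t => g1 t - g1 a) (a := a) (b := b)
    (B := fun t => B * (t - a) ^ 2 / 2) (B' := fun t => B * (t - a))
    (fun x _ => (hφd x).continuousAt.continuousWithinAt)
    (fun x _ => (hφd x).hasDerivWithinAt.mono (fun y hy => trivial))
    (by simp [hφ])
    (fun x => by
      have : HasDerivAt (fun t : ℝ => B * (t - a) ^ 2 / 2) (B * (2 * (x - a) ^ 1 * 1) / 2) x := by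
        exact (((hasDerivAt_id x).sub_const a).pow 2).const_mul B |>.div_const 2
      simpa using this.congr_deriv (by ring))
    (fun x hx => by
      have := hlip x a
      rw [_root_.abs_of_nonneg (by linarith [hx.1] : (0:ℝ) ≤ x - a)] at this
      simpa using this)
  have := key (right_mem_Icc.mpr hab)
  simpa [hφ] using this

/-- Second-order Taylor bound with a uniform bound on the second derivative. -/
lemma taylor_bound {g g1 g2 : ℝ → ℂ} (hg : ∀ t, HasDerivAt g (g1 t) t)
    (hg1 : ∀ t, HasDerivAt g1 (g2 t) t) {B : ℝ} (hB : ∀ t, ‖g2 t‖ ≤ B)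
    (a b : ℝ) :
    ‖g b - g a - g1 a * ((b : ℂ) - (a : ℂ))‖ ≤ B * (b - a) ^ 2 / 2 := by
  rcases le_or_gt a b with hab | hab
  · exact taylor_half hg hg1 hB hab
  · -- reflect through a
    set G : ℝ → ℂ := fun t => g (2 * a - t) with hG
    set G1 : ℝ → ℂ := fun t => -g1 (2 * a - t) with hG1
    set G2 : ℝ → ℂ := fun t => g2 (2 * a - t) with hG2
    have hinner : ∀ t : ℝ, HasDerivAt (fun s : ℝ => 2 * a - s) (-1 : ℝ) t := by
      intro t
      exact (hasDerivAt_id t).const_sub (2 * a)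
    have hGd : ∀ t, HasDerivAt G (G1 t) t := by
      intro t
      have := (hg (2 * a - t)).scomp t (hinner t)
      simpa [hG, hG1, Function.comp_def] using this
    have hG1d : ∀ t, HasDerivAt G1 (G2 t) t := by
      intro t
      have := ((hg1 (2 * a - t)).scomp t (hinner t)).neg
      simpa [hG1, hG2, Function.comp_def, Pi.neg_def] using this
    have hG2B : ∀ t, ‖G2 t‖ ≤ B := fun t => hB _
    have h := taylor_half hGd hG1d hG2B (a := a) (b := 2 * a - b) (by linarith)
    have e1 : G (2 * a - b) = g b := by simp [hG]
    have e2 : G a = g a := by rw [hG]; simp only []; congr 1; ring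
    have e3 : G1 a = -g1 a := by rw [hG1]; simp only []; congr 2; ring
    rw [e1, e2, e3] at h
    have e4 : g b - g a - - g1 a * (((2 * a - b : ℝ) : ℂ) - (a : ℂ))
        = g b - g a - g1 a * ((b : ℂ) - (a : ℂ)) := by
      push_cast
      ring
    rw [e4] at h
    calc ‖g b - g a - g1 a * ((b : ℂ) - (a : ℂ))‖
        ≤ B * (2 * a - b - a) ^ 2 / 2 := h
      _ = B * (b - a) ^ 2 / 2 := by ring

end TaylorPart


open Complex MeasureTheory

/-- Lemma 1 of the paper: for a finite complex measure `ν` on `[0,1]` (represented in polar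
form `ν(df) = h(f) μ(df)` with `μ = |ν|` a finite measure and `|h| = 1`), and any trigonometric
polynomial `X` of degree at most `m`,
`|∫ X dν| ≤ ‖X‖_∞ (|ν|(F) + Σ_j |∫_{N_j} dν| + Σ_j 2πm |∫_{N_j}(f−f_j) dν|
   + Σ_j ((2πm)²/2) ∫_{N_j}(f−f_j)² d|ν|)`. -/
theorem lemma_taylor_split (m k : ℕ) (x : Fin (2 * m + 1) → ℂ) (X : ℝ → ℂ)
    (hX : ∀ f : ℝ, X f = ∑ j : Fin (2 * m + 1), x j *
      Complex.exp (2 * Real.pi * Complex.I * ((j : ℂ) - (m : ℂ)) * f))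
    (μ : Measure ℝ) [IsFiniteMeasure μ] (h : ℝ → ℂ) (hmeas : Measurable h)
    (hunit : ∀ f, ‖h f‖ = 1) (hsupp : μ (Set.Icc (0 : ℝ) 1)ᶜ = 0)
    (fj : Fin k → ℝ) (N : Fin k → Set ℝ) (hNmeas : ∀ j, MeasurableSet (N j))
    (hmem : ∀ j, fj j ∈ N j) (hsub : ∀ j, N j ⊆ Set.Icc (0 : ℝ) 1)
    (hdisj : Pairwise (Function.onFun Disjoint N))
    (F : Set ℝ) (hF : F = Set.Icc (0 : ℝ) 1 \ ⋃ j, N j) :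
    ‖∫ f, X f * h f ∂μ‖ ≤ (⨆ g : ℝ, ‖X g‖) *
      ((μ F).toReal
        + ∑ j, ‖∫ f in N j, h f ∂μ‖
        + ∑ j, 2 * Real.pi * m * ‖∫ f in N j, ((f - fj j : ℝ) : ℂ) * h f ∂μ‖
        + ∑ j, (2 * Real.pi * m) ^ 2 / 2 * ∫ f in N j, (f - fj j) ^ 2 ∂μ) := by
  classical
  have hXe : X = fun f : ℝ => ∑ j : Fin (2 * m + 1), x j *
      Complex.exp (2 * Real.pi * Complex.I * ((j : ℂ) - (m : ℂ)) * (f : ℂ)) := funext hX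
  set C := ⨆ g : ℝ, ‖X g‖ with hCdef
  -- supremum bounds
  have hXbd : ∀ g : ℝ, ‖X g‖ ≤ ∑ j : Fin (2 * m + 1), ‖x j‖ := by
    intro g
    rw [hX g]
    refine (norm_sum_le _ _).trans ?_
    refine Finset.sum_le_sum fun j _ => ?_
    rw [norm_mul]
    have h1 : ‖Complex.exp (2 * Real.pi * Complex.I * ((j : ℂ) - (m : ℂ)) * (g : ℂ))‖ = 1 := by
      rw [show (2 * (Real.pi : ℂ) * Complex.I * ((j : ℂ) - (m : ℂ)) * (g : ℂ))
          = ((2 * Real.pi * ((j : ℕ) : ℝ) * g - 2 * Real.pi * (m : ℝ) * g : ℝ) : ℂ) * Complex.I by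
        push_cast; ring]
      exact Complex.norm_exp_ofReal_mul_I _
    rw [h1, mul_one]
  have hbdd : BddAbove (Set.range fun g : ℝ => ‖X g‖) :=
    ⟨_, by rintro y ⟨g, rfl⟩; exact hXbd g⟩
  have hCle : ∀ g : ℝ, ‖X g‖ ≤ C := fun g => le_ciSup hbdd g
  have hC0 : (0 : ℝ) ≤ C := le_trans (norm_nonneg _) (hCle 0)
  -- derivatives
  set X1 : ℝ → ℂ := fun t => ∑ j : Fin (2 * m + 1), x j * (2 * Real.pi * Complex.I * ((j : ℂ) - (m : ℂ))) *
      Complex.exp (2 * Real.pi * Complex.I * ((j : ℂ) - (m : ℂ)) * (t : ℂ)) with hX1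
  set X2 : ℝ → ℂ := fun t => ∑ j : Fin (2 * m + 1), x j * (2 * Real.pi * Complex.I * ((j : ℂ) - (m : ℂ)))
      * (2 * Real.pi * Complex.I * ((j : ℂ) - (m : ℂ)))
      * Complex.exp (2 * Real.pi * Complex.I * ((j : ℂ) - (m : ℂ)) * (t : ℂ)) with hX2
  have hXd : ∀ t, HasDerivAt X (X1 t) t := by
    intro t
    rw [hXe, hX1]
    have hterms : ∀ j ∈ Finset.univ, HasDerivAt
        (fun s : ℝ => x j * Complex.exp (2 * Real.pi * Complex.I * ((j : ℂ) - (m : ℂ)) * (s : ℂ)))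
        (x j * ((2 * Real.pi * Complex.I * ((j : ℂ) - (m : ℂ))) *
          Complex.exp (2 * Real.pi * Complex.I * ((j : ℂ) - (m : ℂ)) * (t : ℂ)))) t :=
      fun j _ => (hasDerivAt_cexp_mul _ t).const_mul (x j)
    exact (HasDerivAt.fun_sum hterms).congr_deriv (Finset.sum_congr rfl fun j _ => by ring)
  have hX1d : ∀ t, HasDerivAt X1 (X2 t) t := by
    intro t
    rw [hX1, hX2]
    have hterms : ∀ j ∈ Finset.univ, HasDerivAt
        (fun s : ℝ => x j * (2 * Real.pi * Complex.I * ((j : ℂ) - (m : ℂ))) *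
          Complex.exp (2 * Real.pi * Complex.I * ((j : ℂ) - (m : ℂ)) * (s : ℂ)))
        (x j * (2 * Real.pi * Complex.I * ((j : ℂ) - (m : ℂ))) *
          ((2 * Real.pi * Complex.I * ((j : ℂ) - (m : ℂ))) *
          Complex.exp (2 * Real.pi * Complex.I * ((j : ℂ) - (m : ℂ)) * (t : ℂ)))) t :=
      fun j _ => (hasDerivAt_cexp_mul _ t).const_mul _
    exact (HasDerivAt.fun_sum hterms).congr_deriv (Finset.sum_congr rfl fun j _ => by ring)
  -- Bernstein bounds
  have hB1 : ∀ t : ℝ, ‖X1 t‖ ≤ 2 * Real.pi * m * C := by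
    intro t
    rw [hX1]
    exact bernstein_step m x C (fun g => by rw [← hX g]; exact hCle g) t
  have hB2 : ∀ t : ℝ, ‖X2 t‖ ≤ (2 * Real.pi * m) ^ 2 * C := by
    intro t
    have hstep := bernstein_step m (fun j => x j * (2 * Real.pi * Complex.I * ((j : ℂ) - (m : ℂ))))
      (2 * Real.pi * m * C) (fun g => hB1 g) t
    rw [hX2]
    calc ‖X2 t‖ ≤ 2 * Real.pi * m * (2 * Real.pi * m * C) := hstep
      _ = (2 * Real.pi * m) ^ 2 * C := by ring
  -- Taylor remainder
  set R : Fin k → ℝ → ℂ := fun i f => X f - X (fj i) - X1 (fj i) * ((f - fj i : ℝ) : ℂ) with hRdef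
  have hR : ∀ (i : Fin k) (f : ℝ),
      ‖R i f‖ ≤ (2 * Real.pi * m) ^ 2 * C * (f - fj i) ^ 2 / 2 := by
    intro i f
    have := taylor_bound hXd hX1d hB2 (fj i) f
    have hcast : ((f - fj i : ℝ) : ℂ) = (f : ℂ) - ((fj i : ℝ) : ℂ) := by push_cast; ring
    rw [hRdef]
    simp only []
    rw [hcast]
    exact this
  -- measurability
  have hXm : Measurable X := by
    rw [hXe]
    exact (continuous_finset_sum _ fun j _ => continuous_const.mul
      (Complex.continuous_exp.comp (continuous_const.mul Complex.continuous_ofReal))).measurable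
  have hXh_meas : Measurable fun f => X f * h f := hXm.mul hmeas
  have hXh_bd : ∀ f, ‖X f * h f‖ ≤ C := by
    intro f
    rw [norm_mul, hunit, mul_one]
    exact hCle f
  have hXh_int : Integrable (fun f => X f * h f) μ :=
    Integrable.mono' (integrable_const C) hXh_meas.aestronglyMeasurable (ae_of_all _ hXh_bd)
  -- sets
  set A := ⋃ i, N i with hA
  have hAmeas : MeasurableSet A := MeasurableSet.iUnion hNmeas
  have hAsub : A ⊆ Set.Icc 0 1 := Set.iUnion_subset hsub
  have hFmeas : MeasurableSet F := by rw [hF]; exact measurableSet_Icc.diff hAmeas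
  have hFA : F ∪ A = Set.Icc (0 : ℝ) 1 := by rw [hF]; exact Set.diff_union_of_subset hAsub
  have hdisjFA : Disjoint F A := by rw [hF]; exact Set.disjoint_sdiff_left
  -- splitting the integral
  have hres : μ.restrict (Set.Icc (0 : ℝ) 1) = μ := by
    have h1 := Measure.restrict_add_restrict_compl (μ := μ)
      (measurableSet_Icc : MeasurableSet (Set.Icc (0 : ℝ) 1))
    rw [Measure.restrict_eq_zero.mpr hsupp, add_zero] at h1
    exact h1
  have hsplit : ∫ f, X f * h f ∂μ
      = (∫ f in F, X f * h f ∂μ) + ∑ i, ∫ f in N i, X f * h f ∂μ := by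
    calc ∫ f, X f * h f ∂μ = ∫ f in F ∪ A, X f * h f ∂μ := by rw [hFA, hres]
      _ = (∫ f in F, X f * h f ∂μ) + ∫ f in A, X f * h f ∂μ :=
          setIntegral_union hdisjFA hAmeas hXh_int.integrableOn hXh_int.integrableOn
      _ = (∫ f in F, X f * h f ∂μ) + ∑ i, ∫ f in N i, X f * h f ∂μ := by
          rw [hA, integral_iUnion hNmeas hdisj hXh_int.integrableOn, tsum_fintype]
  -- bound on F
  have hFbound : ‖∫ f in F, X f * h f ∂μ‖ ≤ C * (μ F).toReal := by
    exact norm_setIntegral_le_of_norm_le_const (measure_lt_top μ F) (fun f _ => hXh_bd f)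
  -- bound on each N i
  have hNi : ∀ i : Fin k, ‖∫ f in N i, X f * h f ∂μ‖
      ≤ C * ‖∫ f in N i, h f ∂μ‖
        + C * (2 * Real.pi * m * ‖∫ f in N i, ((f - fj i : ℝ) : ℂ) * h f ∂μ‖)
        + C * ((2 * Real.pi * m) ^ 2 / 2 * ∫ f in N i, (f - fj i) ^ 2 ∂μ) := by
    intro i
    have hmono : ∀ f ∈ N i, |f - fj i| ≤ 1 := by
      intro f hf
      have h1 := hsub i hf
      have h2 := hsub i (hmem i)
      rw [Set.mem_Icc] at h1 h2
      rw [abs_le]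
      constructor <;> linarith [h1.1, h1.2, h2.1, h2.2]
    have hh_int : IntegrableOn (fun f => h f) (N i) μ :=
      Integrable.mono' (integrable_const 1) hmeas.aestronglyMeasurable.restrict
        (ae_of_all _ fun f => by rw [hunit])
    have hlin_meas : Measurable fun f : ℝ => ((f - fj i : ℝ) : ℂ) * h f :=
      (Complex.continuous_ofReal.measurable.comp (measurable_id.sub_const (fj i))).mul hmeas
    have hlin_int : IntegrableOn (fun f : ℝ => ((f - fj i : ℝ) : ℂ) * h f) (N i) μ :=
      Integrable.mono' (integrable_const 1) hlin_meas.aestronglyMeasurable.restrict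
        ((ae_restrict_iff' (hNmeas i)).mpr (ae_of_all _ fun f hf => by
          rw [norm_mul, hunit, mul_one,
            Complex.norm_real, Real.norm_eq_abs]
          exact hmono f hf))
    have hsq_meas : Measurable fun f : ℝ => (f - fj i) ^ 2 :=
      (measurable_id.sub_const (fj i)).pow_const 2
    have hsq_int : IntegrableOn (fun f : ℝ => (f - fj i) ^ 2) (N i) μ :=
      Integrable.mono' (integrable_const 1) hsq_meas.aestronglyMeasurable.restrict
        ((ae_restrict_iff' (hNmeas i)).mpr (ae_of_all _ fun f hf => by
          rw [Real.norm_eq_abs, _root_.abs_of_nonneg (sq_nonneg _)]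
          have := hmono f hf
          nlinarith [_root_.sq_abs (f - fj i), abs_nonneg (f - fj i)]))
    have hRmeas : Measurable (R i) := by
      rw [hRdef]
      exact (hXm.sub measurable_const).sub
        (measurable_const.mul (Complex.continuous_ofReal.measurable.comp
          (measurable_id.sub_const (fj i))))
    have hRh_meas : Measurable fun f => R i f * h f := hRmeas.mul hmeas
    have hRh_bd : ∀ f ∈ N i, ‖R i f * h f‖ ≤ (2 * Real.pi * m) ^ 2 * C / 2 := by
      intro f hf
      rw [norm_mul, hunit, mul_one]
      have h1 := hR i f
      have h2 := hmono f hf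
      have h3 : (f - fj i) ^ 2 ≤ 1 := by nlinarith [_root_.sq_abs (f - fj i), abs_nonneg (f - fj i)]
      have h4 : (0 : ℝ) ≤ (2 * Real.pi * m) ^ 2 * C := by positivity
      nlinarith
    have hRh_int : IntegrableOn (fun f => R i f * h f) (N i) μ :=
      Integrable.mono' (integrable_const ((2 * Real.pi * m) ^ 2 * C / 2))
        hRh_meas.aestronglyMeasurable.restrict
        ((ae_restrict_iff' (hNmeas i)).mpr (ae_of_all _ hRh_bd))
    have hptwise : ∀ f : ℝ, X f * h f
        = X (fj i) * h f + X1 (fj i) * (((f - fj i : ℝ) : ℂ) * h f) + R i f * h f := by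
      intro f
      rw [hRdef]
      ring
    have hdecomp : ∫ f in N i, X f * h f ∂μ
        = X (fj i) * (∫ f in N i, h f ∂μ)
          + X1 (fj i) * (∫ f in N i, ((f - fj i : ℝ) : ℂ) * h f ∂μ)
          + ∫ f in N i, R i f * h f ∂μ := by
      calc ∫ f in N i, X f * h f ∂μ
          = ∫ f in N i, (X (fj i) * h f + X1 (fj i) * (((f - fj i : ℝ) : ℂ) * h f)
              + R i f * h f) ∂μ := integral_congr_ae (ae_of_all _ fun f => hptwise f)
        _ = (∫ f in N i, (X (fj i) * h f + X1 (fj i) * (((f - fj i : ℝ) : ℂ) * h f)) ∂μ)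
              + ∫ f in N i, R i f * h f ∂μ :=
            integral_add ((hh_int.const_mul _).add (hlin_int.const_mul _)) hRh_int
        _ = (∫ f in N i, X (fj i) * h f ∂μ)
              + (∫ f in N i, X1 (fj i) * (((f - fj i : ℝ) : ℂ) * h f) ∂μ)
              + ∫ f in N i, R i f * h f ∂μ := by
            rw [integral_add (hh_int.const_mul _) (hlin_int.const_mul _)]
        _ = X (fj i) * (∫ f in N i, h f ∂μ)
              + X1 (fj i) * (∫ f in N i, ((f - fj i : ℝ) : ℂ) * h f ∂μ)
              + ∫ f in N i, R i f * h f ∂μ := by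
            rw [integral_const_mul, integral_const_mul]
    rw [hdecomp]
    have habs1 : ‖X (fj i) * ∫ f in N i, h f ∂μ‖
        ≤ C * ‖∫ f in N i, h f ∂μ‖ := by
      rw [norm_mul]
      exact mul_le_mul_of_nonneg_right (hCle _) (norm_nonneg _)
    have habs2 : ‖X1 (fj i) * ∫ f in N i, ((f - fj i : ℝ) : ℂ) * h f ∂μ‖
        ≤ 2 * Real.pi * m * C * ‖∫ f in N i, ((f - fj i : ℝ) : ℂ) * h f ∂μ‖ := by
      rw [norm_mul]
      exact mul_le_mul_of_nonneg_right (hB1 _) (norm_nonneg _)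
    have habs3 : ‖∫ f in N i, R i f * h f ∂μ‖
        ≤ (2 * Real.pi * m) ^ 2 * C / 2 * ∫ f in N i, (f - fj i) ^ 2 ∂μ := by
      calc ‖∫ f in N i, R i f * h f ∂μ‖ ≤ ∫ f in N i, ‖R i f * h f‖ ∂μ :=
            norm_integral_le_integral_norm _
        _ ≤ ∫ f in N i, (2 * Real.pi * m) ^ 2 * C / 2 * (f - fj i) ^ 2 ∂μ := by
            apply setIntegral_mono_on hRh_int.norm (hsq_int.const_mul _) (hNmeas i)
            intro f hf
            rw [norm_mul, hunit, mul_one]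
            calc ‖R i f‖ ≤ (2 * Real.pi * m) ^ 2 * C * (f - fj i) ^ 2 / 2 := hR i f
              _ = (2 * Real.pi * m) ^ 2 * C / 2 * (f - fj i) ^ 2 := by ring
        _ = (2 * Real.pi * m) ^ 2 * C / 2 * ∫ f in N i, (f - fj i) ^ 2 ∂μ := integral_const_mul _ _
    calc ‖X (fj i) * (∫ f in N i, h f ∂μ)
          + X1 (fj i) * (∫ f in N i, ((f - fj i : ℝ) : ℂ) * h f ∂μ)
          + ∫ f in N i, R i f * h f ∂μ‖
        ≤ ‖X (fj i) * (∫ f in N i, h f ∂μ)‖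
          + ‖X1 (fj i) * (∫ f in N i, ((f - fj i : ℝ) : ℂ) * h f ∂μ)‖
          + ‖∫ f in N i, R i f * h f ∂μ‖ :=
          (norm_add_le _ _).trans (add_le_add_left (norm_add_le _ _) _)
      _ ≤ C * ‖∫ f in N i, h f ∂μ‖
          + 2 * Real.pi * m * C * ‖∫ f in N i, ((f - fj i : ℝ) : ℂ) * h f ∂μ‖
          + (2 * Real.pi * m) ^ 2 * C / 2 * ∫ f in N i, (f - fj i) ^ 2 ∂μ :=
          add_le_add (add_le_add habs1 habs2) habs3
      _ = C * ‖∫ f in N i, h f ∂μ‖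
          + C * (2 * Real.pi * m * ‖∫ f in N i, ((f - fj i : ℝ) : ℂ) * h f ∂μ‖)
          + C * ((2 * Real.pi * m) ^ 2 / 2 * ∫ f in N i, (f - fj i) ^ 2 ∂μ) := by ring
  -- assembly
  rw [hsplit]
  calc ‖(∫ f in F, X f * h f ∂μ) + ∑ i, ∫ f in N i, X f * h f ∂μ‖
      ≤ ‖∫ f in F, X f * h f ∂μ‖
        + ∑ i, ‖∫ f in N i, X f * h f ∂μ‖ :=
        (norm_add_le _ _).trans (add_le_add_right (norm_sum_le _ _) _)
    _ ≤ C * (μ F).toReal + ∑ i, (C * ‖∫ f in N i, h f ∂μ‖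
        + C * (2 * Real.pi * m * ‖∫ f in N i, ((f - fj i : ℝ) : ℂ) * h f ∂μ‖)
        + C * ((2 * Real.pi * m) ^ 2 / 2 * ∫ f in N i, (f - fj i) ^ 2 ∂μ)) :=
        add_le_add hFbound (Finset.sum_le_sum fun i _ => hNi i)
    _ = C * ((μ F).toReal
        + ∑ i, ‖∫ f in N i, h f ∂μ‖
        + ∑ i, 2 * Real.pi * m * ‖∫ f in N i, ((f - fj i : ℝ) : ℂ) * h f ∂μ‖
        + ∑ i, (2 * Real.pi * m) ^ 2 / 2 * ∫ f in N i, (f - fj i) ^ 2 ∂μ) := by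
        rw [Finset.sum_add_distrib, Finset.sum_add_distrib]
        simp only [← Finset.mul_sum]
        ring
end

section
/- Suppose Q is a continuous function on [0,1], T = {f_1,...,f_k}, N_j disjoint neighborhoods of f_j, F = [0,1] \ ∪ N_j, such that |Q(f)| ≤ 1 − (C_a/2)n^2(f−f_j)^2 on N_j and |Q(f)| ≤ 1 − C_b on F, and Q(f_j) equals the sign of the atom of ν at f_j for each j. Let ν be a finite complex measure and write P_T(ν) for its restriction to T and P_{T^c}(ν) for its restriction to the complement. If |∫_0^1 Q(f) ν(df)| ≤ B, then ‖P_{T^c}(ν)‖_TV − ‖P_T(ν)‖_TV ≥ C_a I_2 + C_b ∫_F |ν|(df) − B, where I_2 = (n²/2) Σ_j ∫_{N_j}(f−f_j)² |ν|(df). -/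
open Complex MeasureTheory

/-- Lower bound on `‖P_{T^c}(ν)‖_TV − ‖P_T(ν)‖_TV` from a dual certificate: if `Q`
interpolates the signs of `ν` on `T`, decays quadratically on each `N_j` and has a gap on
`F`, and `|∫ Q dν| ≤ B`, then
`‖P_{T^c}(ν)‖_TV − ‖P_T(ν)‖_TV ≥ C_a I₂ + C_b |ν|(F) − B`.  The finite complex measure `ν`
is written in polar form `ν(df) = h(f) μ(df)` with `μ = |ν|` and `|h| = 1`. -/
theorem dual_certificate_lower_bound (n k : ℕ) (hn : 0 < n)
    (μ : Measure ℝ) [IsFiniteMeasure μ] (h : ℝ → ℂ) (hmeas : Measurable h)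
    (hunit : ∀ f, ‖h f‖ = 1) (hsupp : μ (Set.Icc (0 : ℝ) 1)ᶜ = 0)
    (fj : Fin k → ℝ) (N : Fin k → Set ℝ) (hNmeas : ∀ j, MeasurableSet (N j))
    (hmem : ∀ j, fj j ∈ N j) (hsub : ∀ j, N j ⊆ Set.Icc (0 : ℝ) 1)
    (hdisj : Pairwise (Function.onFun Disjoint N))
    (T F : Set ℝ) (hT : T = Set.range fj) (hF : F = Set.Icc (0 : ℝ) 1 \ ⋃ j, N j)
    (Ca Cb B : ℝ) (hCa : 0 < Ca) (hCb : 0 < Cb)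
    (Q : ℝ → ℂ) (hQcont : Continuous Q)
    (hQsign : ∀ j, Q (fj j) = (starRingEnd ℂ) (h (fj j)))
    (hQnear : ∀ j, ∀ f ∈ N j, ‖Q f‖ ≤ 1 - Ca / 2 * n ^ 2 * (f - fj j) ^ 2)
    (hQfar : ∀ f ∈ F, ‖Q f‖ ≤ 1 - Cb)
    (hB : ‖∫ f, Q f * h f ∂μ‖ ≤ B)
    (I2 : ℝ) (hI2 : I2 = (n : ℝ) ^ 2 / 2 * ∑ j, ∫ f in N j, (f - fj j) ^ 2 ∂μ) :
    (μ (Set.Icc (0 : ℝ) 1 \ T)).toReal - (μ T).toReal ≥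
      Ca * I2 + Cb * (μ F).toReal - B := by
  have hTfin : T.Finite := hT ▸ Set.finite_range fj
  have hTmeas : MeasurableSet T := hTfin.measurableSet
  have hTsub : T ⊆ Set.Icc (0 : ℝ) 1 := by
    rintro x hx
    rw [hT] at hx; obtain ⟨j, rfl⟩ := hx
    exact hsub j (hmem j)
  set A := Set.Icc (0 : ℝ) 1 \ T with hA
  have hAmeas : MeasurableSet A := measurableSet_Icc.diff hTmeas
  have hFmeas : MeasurableSet F := hF ▸ measurableSet_Icc.diff (MeasurableSet.iUnion hNmeas)
  have hae : ∀ᵐ x ∂μ, x ∈ Set.Icc (0 : ℝ) 1 := by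
    rw [ae_iff]
    exact hsupp
  -- Q bounded on Icc
  obtain ⟨M, hM⟩ := (isCompact_Icc (a := (0:ℝ)) (b := 1)).exists_bound_of_continuousOn
    hQcont.continuousOn
  set g := fun f => Q f * h f with hg
  have hgmeas : AEStronglyMeasurable g μ :=
    ((hQcont.measurable.mul hmeas)).aestronglyMeasurable
  have hgnorm : ∀ x, ‖g x‖ = ‖Q x‖ := by
    intro x
    simp [hg, map_mul, hunit x]
  have hgint : Integrable g μ := by
    refine Integrable.mono' (integrable_const M) hgmeas ?_
    filter_upwards [hae] with x hx
    rw [hgnorm x]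
    simpa using hM x hx
  set q := fun f => ‖Q f‖ with hq
  have hqint : Integrable q μ := by
    have := hgint.norm
    convert this using 1
    ext x
    exact (hgnorm x).symm
  -- quadratic integrand integrable on any set
  have hquadint : ∀ (j : Fin k) (s : Set ℝ), IntegrableOn (fun f => (f - fj j) ^ 2) s μ := by
    intro j s
    refine Integrable.mono' (integrable_const 1) ?_ ?_
    · exact ((continuous_id.sub continuous_const).pow 2).aestronglyMeasurable
    · filter_upwards [ae_restrict_of_ae hae] with x hx
      have h1 := (hsub j (hmem j)).1
      have h2 := (hsub j (hmem j)).2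
      rw [Real.norm_eq_abs, _root_.abs_pow, _root_.sq_abs]
      nlinarith [hx.1, hx.2]
  -- the sets N j \ T
  set D := fun j => N j \ T with hD
  have hDmeas : ∀ j, MeasurableSet (D j) := fun j => (hNmeas j).diff hTmeas
  have hDdisj : Pairwise (Function.onFun Disjoint D) := fun i j hij =>
    ((hdisj hij).mono Set.diff_subset Set.diff_subset)
  have hNT : ∀ j, N j ∩ T ⊆ {fj j} := by
    intro j x hx
    rw [hT] at hx
    obtain ⟨hxN, j', rfl⟩ := hx
    rcases eq_or_ne j' j with rfl | hne
    · rfl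
    · exact ((Set.disjoint_left.mp (hdisj hne)) (hmem j') hxN).elim
  -- decomposition of A
  have hdecomp : A = F ∪ ⋃ j, D j := by
    rw [hA, hF, hD]
    ext x
    simp only [Set.mem_diff, Set.mem_union, Set.mem_iUnion]
    constructor
    · rintro ⟨hxI, hxT⟩
      by_cases hxN : ∃ j, x ∈ N j
      · obtain ⟨j, hj⟩ := hxN
        exact Or.inr ⟨j, hj, hxT⟩
      · exact Or.inl ⟨hxI, by push_neg at hxN; simpa using hxN⟩
    · rintro (⟨hxI, hxN⟩ | ⟨j, hxN, hxT⟩)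
      · refine ⟨hxI, fun hxT => hxN ?_⟩
        rw [hT] at hxT; obtain ⟨j, rfl⟩ := hxT
        exact ⟨j, hmem j⟩
      · exact ⟨hsub j hxN, hxT⟩
  have hFdisjU : Disjoint F (⋃ j, D j) := by
    rw [hF]
    refine Set.disjoint_iUnion_right.2 fun j => ?_
    exact (Set.disjoint_sdiff_left.mono_right (Set.diff_subset.trans (Set.subset_iUnion N j)))
  -- splitting lemma for integrals over A
  have key : ∀ u : ℝ → ℝ, IntegrableOn u A μ →
      ∫ f in A, u f ∂μ = ∫ f in F, u f ∂μ + ∑ j, ∫ f in D j, u f ∂μ := by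
    intro u hu
    rw [hdecomp] at hu ⊢
    rw [setIntegral_union hFdisjU (MeasurableSet.iUnion hDmeas)
        (hu.mono_set Set.subset_union_left) (hu.mono_set Set.subset_union_right),
      integral_iUnion hDmeas hDdisj (hu.mono_set Set.subset_union_right),
      tsum_fintype]
  -- integral of g over T
  have hTint : ∫ f in T, g f ∂μ = ((μ T).toReal : ℂ) := by
    rw [setIntegral_congr_fun hTmeas (g := fun _ => (1 : ℂ)) ?_]
    · simp [setIntegral_const, Measure.real]
    · intro f hf
      rw [hT] at hf; obtain ⟨j, rfl⟩ := hf
      show Q (fj j) * h (fj j) = 1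
      rw [hQsign j, mul_comm, Complex.mul_conj]
      norm_cast
      rw [← Complex.sq_norm, hunit (fj j)]; norm_num
  -- full integral splits as T + A
  have hrestr : μ.restrict (Set.Icc (0:ℝ) 1) = μ :=
    Measure.restrict_eq_self_of_ae_mem hae
  have hsplit : ∫ f, g f ∂μ = ∫ f in T, g f ∂μ + ∫ f in A, g f ∂μ := by
    conv_lhs => rw [← hrestr]
    rw [show Set.Icc (0:ℝ) 1 = T ∪ A from (Set.union_diff_cancel hTsub).symm,
      setIntegral_union Set.disjoint_sdiff_right hAmeas
        (hgint.integrableOn) (hgint.integrableOn)]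
  -- bound on ∫_A |g|
  have hAq : ‖∫ f in A, g f ∂μ‖ ≤ ∫ f in A, q f ∂μ := by
    refine (norm_integral_le_integral_norm _).trans_eq ?_
    exact setIntegral_congr_fun hAmeas fun x _ => hgnorm x
  -- bounds on pieces
  have hones : ∫ f in A, (1:ℝ) ∂μ = ∫ f in F, (1:ℝ) ∂μ + ∑ j, ∫ f in D j, (1:ℝ) ∂μ :=
    key _ (integrable_const 1).integrableOn
  have hFbound : ∫ f in F, q f ∂μ ≤ ∫ f in F, (1:ℝ) ∂μ - Cb * (μ F).toReal := by
    have h1 : ∫ f in F, q f ∂μ ≤ ∫ f in F, (1 - Cb) ∂μ := by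
      refine setIntegral_mono_on hqint.integrableOn (integrable_const _).integrableOn hFmeas ?_
      intro x hx
      exact hQfar x hx
    simpa [setIntegral_const, smul_eq_mul, mul_comm, mul_sub, sub_mul] using h1.trans_eq (by
      simp [setIntegral_const, smul_eq_mul, Measure.real]; ring)
  have hquadD : ∀ j, ∫ f in D j, (f - fj j) ^ 2 ∂μ = ∫ f in N j, (f - fj j) ^ 2 ∂μ := by
    intro j
    have hNj : N j = D j ∪ (N j ∩ T) := by
      rw [hD]; rw [Set.diff_union_inter]
    have hz : ∫ f in N j ∩ T, (f - fj j) ^ 2 ∂μ = 0 := by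
      rw [setIntegral_congr_fun ((hNmeas j).inter hTmeas) (g := fun _ => (0:ℝ))
        (fun x hx => by have := hNT j hx; simp only [Set.mem_singleton_iff] at this; simp [this])]
      simp
    conv_rhs => rw [hNj]
    rw [setIntegral_union (Set.disjoint_left.mpr fun x hx hx2 => hx.2 hx2.2) ((hNmeas j).inter hTmeas)
      ((hquadint j _)) ((hquadint j _)), hz, add_zero]
  have hDbound : ∀ j, ∫ f in D j, q f ∂μ ≤
      ∫ f in D j, (1:ℝ) ∂μ - Ca / 2 * n ^ 2 * ∫ f in N j, (f - fj j) ^ 2 ∂μ := by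
    intro j
    have h1 : ∫ f in D j, q f ∂μ ≤ ∫ f in D j, (1 - Ca / 2 * n ^ 2 * (f - fj j) ^ 2) ∂μ := by
      refine setIntegral_mono_on hqint.integrableOn ?_ (hDmeas j) ?_
      · exact (integrable_const 1).integrableOn.sub ((hquadint j _).const_mul _)
      · intro x hx
        exact hQnear j x hx.1
    refine h1.trans_eq ?_
    rw [integral_sub (integrable_const 1).integrableOn ((hquadint j _).const_mul _),
      integral_const_mul, hquadD j]
  have hAbound : ∫ f in A, q f ∂μ ≤
      ∫ f in A, (1:ℝ) ∂μ - Cb * (μ F).toReal - Ca * I2 := by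
    rw [key q hqint.integrableOn, hones, hI2]
    have hsum : ∑ j, ∫ f in D j, q f ∂μ ≤
        ∑ j, (∫ f in D j, (1:ℝ) ∂μ - Ca / 2 * n ^ 2 * ∫ f in N j, (f - fj j) ^ 2 ∂μ) :=
      Finset.sum_le_sum fun j _ => hDbound j
    rw [Finset.sum_sub_distrib] at hsum
    have := add_le_add hFbound hsum
    rw [← Finset.mul_sum] at this
    calc ∫ f in F, q f ∂μ + ∑ j, ∫ f in D j, q f ∂μ
        ≤ (∫ f in F, (1:ℝ) ∂μ - Cb * (μ F).toReal) +
          (∑ j, ∫ f in D j, (1:ℝ) ∂μ - Ca / 2 * ↑n ^ 2 * ∑ j, ∫ f in N j, (f - fj j) ^ 2 ∂μ) :=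
          this
      _ = _ := by ring
  -- putting everything together
  have hAone : ∫ f in A, (1:ℝ) ∂μ = (μ A).toReal := by
    simp [setIntegral_const, Measure.real]
  have hmain : (μ T).toReal ≤ B + ((μ A).toReal - Cb * (μ F).toReal - Ca * I2) := by
    have h1 : ((μ T).toReal : ℝ) = ‖((μ T).toReal : ℂ)‖ := by
      rw [Complex.norm_real, Real.norm_eq_abs, _root_.abs_of_nonneg ENNReal.toReal_nonneg]
    rw [h1, ← hTint]
    have h2 : ∫ f in T, g f ∂μ = (∫ f, g f ∂μ) - ∫ f in A, g f ∂μ := by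
      rw [hsplit]; ring
    rw [h2]
    calc ‖(∫ f, g f ∂μ) - ∫ f in A, g f ∂μ‖
        ≤ ‖∫ f, g f ∂μ‖ + ‖∫ f in A, g f ∂μ‖ := by
          exact (norm_sub_le _ _)
      _ ≤ B + ∫ f in A, q f ∂μ := add_le_add hB hAq
      _ ≤ B + ((μ A).toReal - Cb * (μ F).toReal - Ca * I2) := by
          rw [← hAone]; exact add_le_add_right hAbound B
  linarith
end

section
/- Let ν be a finite complex measure on [0,1] and suppose there exists a continuous Q_j⋆ with Q_j⋆(f_j) = 1, |1 − Q_j⋆(f)| ≤ C_1' n²(f−f_j)² on N_j, |Q_j⋆(f)| ≤ C_1' n²(f−f_{j'})² on N_{j'} for j' ≠ j, and |Q_j⋆(f)| ≤ C_2' on F. If |∫_0^1 Q_j⋆(f) ν(df)| ≤ B_1, ∫_F |ν|(df) ≤ B_2, and I_2 := (n²/2) Σ_{j'} ∫_{N_{j'}} (f−f_{j'})² |ν|(df) ≤ B_3, then |∫_{N_j} ν(df)| ≤ B_1 + C_2' B_2 + 2C_1' B_3. -/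
open Complex MeasureTheory

/-- Deterministic core of the amplitude-approximation claim (Theorem 2(iii)): given a dual
polynomial `Q_j⋆` with `Q_j⋆(f_j) = 1`, quadratic deviation on each near region and bounded
on the far region, if `|∫ Q_j⋆ dν| ≤ B₁`, `|ν|(F) ≤ B₂` and `I₂ ≤ B₃`, then
`|∫_{N_j} dν| ≤ B₁ + C₂' B₂ + 2 C₁' B₃`.  The finite complex measure `ν` is written in polar
form `ν(df) = h(f) μ(df)` with `μ = |ν|` and `|h| = 1`. -/
theorem amplitude_approx_bound (n k : ℕ) (hn : 0 < n)
    (μ : Measure ℝ) [IsFiniteMeasure μ] (h : ℝ → ℂ) (hmeas : Measurable h)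
    (hunit : ∀ f, ‖h f‖ = 1) (hsupp : μ (Set.Icc (0 : ℝ) 1)ᶜ = 0)
    (fj : Fin k → ℝ) (N : Fin k → Set ℝ) (hNmeas : ∀ j', MeasurableSet (N j'))
    (hmem : ∀ j', fj j' ∈ N j') (hsub : ∀ j', N j' ⊆ Set.Icc (0 : ℝ) 1)
    (hdisj : Pairwise (Function.onFun Disjoint N))
    (F : Set ℝ) (hF : F = Set.Icc (0 : ℝ) 1 \ ⋃ j', N j')
    (j : Fin k) (C1' C2' B1 B2 B3 : ℝ) (hC1' : 0 ≤ C1') (hC2' : 0 ≤ C2')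
    (Q : ℝ → ℂ) (hQcont : Continuous Q) (hQ1 : Q (fj j) = 1)
    (hQnear : ∀ f ∈ N j, ‖1 - Q f‖ ≤ C1' * n ^ 2 * (f - fj j) ^ 2)
    (hQother : ∀ j', j' ≠ j → ∀ f ∈ N j', ‖Q f‖ ≤ C1' * n ^ 2 * (f - fj j') ^ 2)
    (hQfar : ∀ f ∈ F, ‖Q f‖ ≤ C2')
    (hB1 : ‖∫ f, Q f * h f ∂μ‖ ≤ B1)
    (hB2 : (μ F).toReal ≤ B2)
    (hB3 : (n : ℝ) ^ 2 / 2 * ∑ j', ∫ f in N j', (f - fj j') ^ 2 ∂μ ≤ B3) :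
    ‖∫ f in N j, h f ∂μ‖ ≤ B1 + C2' * B2 + 2 * C1' * B3 := by
  have hae : ∀ᵐ f ∂μ, f ∈ Set.Icc (0 : ℝ) 1 := by
    rw [MeasureTheory.ae_iff]
    simpa [Set.compl_def] using hsupp
  have μrest : μ.restrict (Set.Icc (0 : ℝ) 1) = μ :=
    Measure.restrict_eq_self_of_ae_mem hae
  obtain ⟨M, hM⟩ := (isCompact_Icc (a := (0:ℝ)) (b := 1)).exists_bound_of_continuousOn
    hQcont.continuousOn
  have hnormh : ∀ f, ‖h f‖ = 1 := fun f => by rw [hunit]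
  -- integrability
  have hg_int : Integrable (fun f => Q f * h f) μ := by
    refine (integrable_const M).mono' ((hQcont.measurable.mul hmeas).aestronglyMeasurable) ?_
    filter_upwards [hae] with f hf
    rw [norm_mul, hnormh, mul_one]
    exact hM f hf
  have hh_int : Integrable h μ := by
    refine (integrable_const (1:ℝ)).mono' hmeas.aestronglyMeasurable ?_
    exact Filter.Eventually.of_forall fun f => le_of_eq (hnormh f)
  have hsq_int : ∀ c : ℝ, Integrable (fun f => (f - c) ^ 2) μ := by
    intro c
    refine (integrable_const ((1 + |c|) ^ 2)).mono'
      (((measurable_id.sub_const c).pow_const 2).aestronglyMeasurable) ?_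
    filter_upwards [hae] with f hf
    have h1 : |f - c| ≤ 1 + |c| := by
      have h2 : |f| ≤ 1 := abs_le.2 ⟨by linarith [hf.1], hf.2⟩
      have h3 : |f - c| ≤ |f| + |c| := by
        have := abs_add_le f (-c); simpa [sub_eq_add_neg] using this
      linarith
    rw [Real.norm_eq_abs, _root_.abs_of_nonneg (sq_nonneg (f - c))]
    nlinarith [abs_nonneg (f - c), _root_.sq_abs (f - c), h1]
  have h1mQ_int : Integrable (fun f => (1 - Q f) * h f) μ := by
    refine (integrable_const (1 + M)).mono'
      (((continuous_const.sub hQcont).measurable.mul hmeas).aestronglyMeasurable) ?_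
    filter_upwards [hae] with f hf
    rw [norm_mul, hnormh, mul_one]
    calc ‖1 - Q f‖ ≤ ‖(1:ℂ)‖ + ‖Q f‖ := norm_sub_le _ _
      _ ≤ 1 + M := by simpa using hM f hf
  -- set up notation
  set g : ℝ → ℂ := fun f => Q f * h f with hg
  have hUmeas : MeasurableSet (⋃ j', N j') := MeasurableSet.iUnion hNmeas
  have hUsub : (⋃ j', N j') ⊆ Set.Icc (0 : ℝ) 1 := Set.iUnion_subset hsub
  have hFmeas : MeasurableSet F := hF ▸ measurableSet_Icc.diff hUmeas
  -- decomposition of the full integral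
  have hsplit : (∫ f, g f ∂μ)
      = (∫ f in F, g f ∂μ) + ∑ j', ∫ f in N j', g f ∂μ := by
    have hIcc : F ∪ (⋃ j', N j') = Set.Icc (0 : ℝ) 1 := by
      rw [hF]; exact Set.diff_union_of_subset hUsub
    have hDisjFU : Disjoint F (⋃ j', N j') := hF ▸ Set.disjoint_sdiff_left
    calc (∫ f, g f ∂μ) = ∫ f in Set.Icc (0:ℝ) 1, g f ∂μ := by
          rw [show (∫ f in Set.Icc (0:ℝ) 1, g f ∂μ)
              = ∫ f, g f ∂(μ.restrict (Set.Icc (0:ℝ) 1)) from rfl, μrest]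
      _ = ∫ f in F ∪ ⋃ j', N j', g f ∂μ := by rw [hIcc]
      _ = (∫ f in F, g f ∂μ) + ∫ f in ⋃ j', N j', g f ∂μ :=
          setIntegral_union hDisjFU hUmeas hg_int.integrableOn hg_int.integrableOn
      _ = (∫ f in F, g f ∂μ) + ∑ j', ∫ f in N j', g f ∂μ := by
          rw [integral_iUnion_fintype hNmeas hdisj fun i => hg_int.integrableOn]
  -- split off the j-th term
  have hsum : (∑ j', ∫ f in N j', g f ∂μ)
      = (∫ f in N j, g f ∂μ) + ∑ j' ∈ Finset.univ.erase j, ∫ f in N j', g f ∂μ :=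
    (Finset.add_sum_erase _ _ (Finset.mem_univ j)).symm
  have hNj : (∫ f in N j, h f ∂μ)
      = (∫ f in N j, (1 - Q f) * h f ∂μ) + ∫ f in N j, g f ∂μ := by
    rw [← integral_add h1mQ_int.integrableOn hg_int.integrableOn]
    congr 1; ext f; simp [hg]; ring
  have hkey : (∫ f in N j, h f ∂μ)
      = (∫ f in N j, (1 - Q f) * h f ∂μ) + (∫ f, g f ∂μ) - (∫ f in F, g f ∂μ)
        - ∑ j' ∈ Finset.univ.erase j, ∫ f in N j', g f ∂μ := by
    rw [hNj]
    have : (∫ f in N j, g f ∂μ) = (∫ f, g f ∂μ) - (∫ f in F, g f ∂μ)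
        - ∑ j' ∈ Finset.univ.erase j, ∫ f in N j', g f ∂μ := by
      rw [hsplit, hsum]; ring
    rw [this]; ring
  -- bounds on each piece
  set I : Fin k → ℝ := fun j' => ∫ f in N j', (f - fj j') ^ 2 ∂μ with hI
  have hInn : ∀ j', 0 ≤ I j' := fun j' => integral_nonneg fun f => sq_nonneg _
  have hT : ‖∫ f in N j, (1 - Q f) * h f ∂μ‖ ≤ C1' * n ^ 2 * I j := by
    have hint : Integrable (fun f => C1' * n ^ 2 * (f - fj j) ^ 2) (μ.restrict (N j)) :=
      ((hsq_int (fj j)).const_mul _).integrableOn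
    have hbound : ∀ᵐ f ∂μ.restrict (N j), ‖(1 - Q f) * h f‖ ≤ C1' * n ^ 2 * (f - fj j) ^ 2 := by
      rw [ae_restrict_iff' (hNmeas j)]
      refine Filter.Eventually.of_forall fun f hf => ?_
      rw [norm_mul, hnormh, mul_one]
      exact hQnear f hf
    calc ‖∫ f in N j, (1 - Q f) * h f ∂μ‖
        ≤ ∫ f in N j, C1' * n ^ 2 * (f - fj j) ^ 2 ∂μ :=
          norm_integral_le_of_norm_le hint hbound
      _ = C1' * n ^ 2 * I j := integral_const_mul _ _
  have hS : ∀ j', j' ≠ j → ‖∫ f in N j', g f ∂μ‖ ≤ C1' * n ^ 2 * I j' := by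
    intro j' hj'
    have hint : Integrable (fun f => C1' * n ^ 2 * (f - fj j') ^ 2) (μ.restrict (N j')) :=
      ((hsq_int (fj j')).const_mul _).integrableOn
    have hbound : ∀ᵐ f ∂μ.restrict (N j'), ‖g f‖ ≤ C1' * n ^ 2 * (f - fj j') ^ 2 := by
      rw [ae_restrict_iff' (hNmeas j')]
      refine Filter.Eventually.of_forall fun f hf => ?_
      rw [hg, norm_mul, hnormh, mul_one]
      exact hQother j' hj' f hf
    calc ‖∫ f in N j', g f ∂μ‖
        ≤ ∫ f in N j', C1' * n ^ 2 * (f - fj j') ^ 2 ∂μ :=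
          norm_integral_le_of_norm_le hint hbound
      _ = C1' * n ^ 2 * I j' := integral_const_mul _ _
  have hAF : ‖∫ f in F, g f ∂μ‖ ≤ C2' * B2 := by
    have : ‖∫ f in F, g f ∂μ‖ ≤ C2' * (μ F).toReal := by
      refine norm_setIntegral_le_of_norm_le_const (measure_lt_top μ F) fun f hf => ?_
      rw [hg, norm_mul, hnormh, mul_one]
      exact hQfar f hf
    exact this.trans (mul_le_mul_of_nonneg_left hB2 hC2')
  have hA : ‖∫ f, g f ∂μ‖ ≤ B1 := by exact hB1
  -- combine
  have hsumS : (∑ j' ∈ Finset.univ.erase j, ‖∫ f in N j', g f ∂μ‖)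
      ≤ ∑ j' ∈ Finset.univ.erase j, C1' * n ^ 2 * I j' :=
    Finset.sum_le_sum fun j' hj' => hS j' (Finset.ne_of_mem_erase hj')
  have hquad : C1' * n ^ 2 * I j + ∑ j' ∈ Finset.univ.erase j, C1' * n ^ 2 * I j'
      ≤ 2 * C1' * B3 := by
    have h1 : C1' * n ^ 2 * I j + ∑ j' ∈ Finset.univ.erase j, C1' * n ^ 2 * I j'
        = C1' * n ^ 2 * ∑ j', I j' := by
      rw [Finset.mul_sum]
      exact Finset.add_sum_erase _ (fun j' => C1' * n ^ 2 * I j') (Finset.mem_univ j)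
    rw [h1]
    have h2 : C1' * n ^ 2 * ∑ j', I j' = 2 * C1' * ((n:ℝ) ^ 2 / 2 * ∑ j', I j') := by ring
    rw [h2]
    refine mul_le_mul_of_nonneg_left ?_ (by linarith)
    exact hB3
  rw [hkey]
  calc ‖(∫ f in N j, (1 - Q f) * h f ∂μ) + (∫ f, g f ∂μ) - (∫ f in F, g f ∂μ)
        - ∑ j' ∈ Finset.univ.erase j, ∫ f in N j', g f ∂μ‖
      ≤ ‖(∫ f in N j, (1 - Q f) * h f ∂μ) + (∫ f, g f ∂μ) - (∫ f in F, g f ∂μ)‖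
        + ‖∑ j' ∈ Finset.univ.erase j, ∫ f in N j', g f ∂μ‖ := norm_sub_le _ _
    _ ≤ ‖(∫ f in N j, (1 - Q f) * h f ∂μ) + (∫ f, g f ∂μ)‖ + ‖∫ f in F, g f ∂μ‖
        + ‖∑ j' ∈ Finset.univ.erase j, ∫ f in N j', g f ∂μ‖ := by
        gcongr; exact norm_sub_le _ _
    _ ≤ (‖∫ f in N j, (1 - Q f) * h f ∂μ‖ + ‖∫ f, g f ∂μ‖) + ‖∫ f in F, g f ∂μ‖
        + ∑ j' ∈ Finset.univ.erase j, ‖∫ f in N j', g f ∂μ‖ := by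
        gcongr
        · exact norm_add_le _ _
        · exact norm_sum_le _ _
    _ ≤ (C1' * n ^ 2 * I j + B1) + C2' * B2
        + ∑ j' ∈ Finset.univ.erase j, C1' * n ^ 2 * I j' := by gcongr <;> assumption
    _ ≤ B1 + C2' * B2 + 2 * C1' * B3 := by
        have := hquad; linarith
end

section
/- Suppose for the true frequency f_j with amplitude c_j the recovered measure satisfies: (i) Σ_{l: f̂_l ∈ N_j} |ĉ_l| d(f_j, f̂_l)² ≤ C_2 ε / n² and (ii) |c_j − Σ_{l: f̂_l ∈ N_j} ĉ_l| ≤ C_1 ε, where ε > 0. If |c_j| > C_1 ε, then there exists l with f̂_l ∈ N_j and d(f_j, f̂_l) ≤ (1/n)·√(C_2/C_1)·(|c_j|/(C_1 ε) − 1)^{-1/2}. -/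
open Complex

/-- Part (iv) of the localization theorem from parts (ii) and (iii): if
`Σ_l |ĉ_l| d(f_j, f̂_l)² ≤ C₂ ε/n²` and `|c_j − Σ_l ĉ_l| ≤ C₁ ε` with `|c_j| > C₁ ε`, then
some recovered frequency `f̂_l` satisfies
`d(f_j, f̂_l) ≤ (1/n) √(C₂/C₁) (|c_j|/(C₁ε) − 1)^{-1/2}`.  Here `d` is the wrap-around
distance on the torus. -/
theorem frequency_localization (n : ℕ) (hn : 0 < n) (C1 C2 ε : ℝ)
    (hC1 : 0 < C1) (hC2 : 0 < C2) (hε : 0 < ε)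
    (L : Type*) [Fintype L] (chat : L → ℂ) (fhat : L → ℝ) (fj : ℝ) (cj : ℂ)
    (d : ℝ → ℝ → ℝ) (hd : ∀ a b, d a b = min |a - b| (1 - |a - b|))
    (hd0 : ∀ l, 0 ≤ d fj (fhat l))
    (h1 : ∑ l, ‖chat l‖ * (d fj (fhat l)) ^ 2 ≤ C2 * ε / n ^ 2)
    (h2 : ‖cj - ∑ l, chat l‖ ≤ C1 * ε)
    (h3 : C1 * ε < ‖cj‖) :
    ∃ l : L, d fj (fhat l) ≤
      Real.sqrt (C2 / C1) / ((n : ℝ) * Real.sqrt (‖cj‖ / (C1 * ε) - 1)) := by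
  by_contra hcon
  push_neg at hcon
  set A := ‖cj‖ with hA
  set t : ℝ := A / (C1 * ε) - 1 with ht
  set δ : ℝ := Real.sqrt (C2 / C1) / ((n : ℝ) * Real.sqrt t) with hδ
  have hC1ε : 0 < C1 * ε := mul_pos hC1 hε
  have htpos : 0 < t := by
    rw [ht, sub_pos, lt_div_iff₀ hC1ε, one_mul]; exact h3
  have hnpos : (0 : ℝ) < n := by exact_mod_cast hn
  have hδpos : 0 ≤ δ := by
    apply div_nonneg (Real.sqrt_nonneg _)
    exact mul_nonneg hnpos.le (Real.sqrt_nonneg _)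
  -- δ² (A - C1ε) = C2 ε / n²
  have hδsq : δ ^ 2 * (A - C1 * ε) = C2 * ε / n ^ 2 := by
    have h1 : δ ^ 2 = (C2 / C1) / ((n : ℝ) ^ 2 * t) := by
      rw [hδ, div_pow, mul_pow, Real.sq_sqrt (div_nonneg hC2.le hC1.le),
        Real.sq_sqrt htpos.le]
    have h2 : A - C1 * ε = t * (C1 * ε) := by
      rw [ht]; field_simp
    rw [h1, h2]
    field_simp
  -- sum of abs is at least A - C1ε
  have hS : A - C1 * ε ≤ ∑ l, ‖chat l‖ := by
    have htri : A ≤ ‖cj - ∑ l, chat l‖ + ‖∑ l, chat l‖ := by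
      calc A = ‖(cj - ∑ l, chat l) + ∑ l, chat l‖ := by rw [sub_add_cancel]
        _ ≤ _ := norm_add_le _ _
    have hsum : ‖∑ l, chat l‖ ≤ ∑ l, ‖chat l‖ :=
      norm_sum_le _ _
    linarith
  -- there is some nonzero chat
  have hSpos : 0 < ∑ l, ‖chat l‖ := lt_of_lt_of_le (by linarith) hS
  obtain ⟨l0, -, hl0⟩ := Finset.exists_lt_of_sum_lt (f := fun _ : L => (0:ℝ))
    (g := fun l => ‖chat l‖) (by simpa using hSpos)
  have hstrict : ∑ l, ‖chat l‖ * δ ^ 2 <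
      ∑ l, ‖chat l‖ * (d fj (fhat l)) ^ 2 := by
    apply Finset.sum_lt_sum
    · intro l _
      apply mul_le_mul_of_nonneg_left _ (norm_nonneg _)
      exact pow_le_pow_left₀ hδpos (le_of_lt (hcon l)) 2
    · refine ⟨l0, Finset.mem_univ _, ?_⟩
      apply mul_lt_mul_of_pos_left _ hl0
      exact pow_lt_pow_left₀ (hcon l0) hδpos (by norm_num)
  have : C2 * ε / n ^ 2 < C2 * ε / n ^ 2 := by
    calc C2 * ε / n ^ 2 = δ ^ 2 * (A - C1 * ε) := hδsq.symm
      _ ≤ δ ^ 2 * ∑ l, ‖chat l‖ :=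
          mul_le_mul_of_nonneg_left hS (sq_nonneg δ)
      _ = ∑ l, ‖chat l‖ * δ ^ 2 := by rw [Finset.mul_sum]; simp [mul_comm]
      _ < ∑ l, ‖chat l‖ * (d fj (fhat l)) ^ 2 := hstrict
      _ ≤ C2 * ε / n ^ 2 := h1
  exact lt_irrefl _ this
end
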